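/- arXiv:1406.3959 — 5 statements merged into one kernel-verified Lean document; each statement's English description precedes it below -/
import Mathlib

section
/- There exists a unique R₁-algebra homomorphism ξ : H^{sp} → H^{A₁} with ξ(U₁) = T, ξ(U₀) = Y·T⁻¹, ξ(V₀) = q^{1/4}·Y·T⁻¹·X⁻¹ and ξ(V₁) = X·T. Moreover ξ(𝕏) = X and ξ(𝕐) = Y, where 𝕏 = V₁⁻¹·U₁⁻¹ and 𝕐 = U₀·U₁ in H^{sp}. -/
noncomputable section

/-- The base ring `R₁ = ℤ[q^{±1/4}, t^{±1/2}]`: the group algebra of `ℤ × ℤ` over `ℤ`,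
where `q^{1/4}` corresponds to the exponent `(1,0)` and `t^{1/2}` to `(0,1)`. -/
abbrev R1 : Type := AddMonoidAlgebra ℤ (ℤ × ℤ)

/-- `q^{1/4}` -/
def R1.q4 : R1 := AddMonoidAlgebra.single (1, 0) 1
/-- `q^{-1/4}` -/
def R1.q4i : R1 := AddMonoidAlgebra.single (-1, 0) 1
/-- `t^{1/2}` -/
def R1.t2 : R1 := AddMonoidAlgebra.single (0, 1) 1
/-- `t^{-1/2}` -/
def R1.t2i : R1 := AddMonoidAlgebra.single (0, -1) 1
/-- `q^{1/2}` -/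
def R1.q2 : R1 := AddMonoidAlgebra.single (2, 0) 1
/-- `q^{-1/2}` -/
def R1.q2i : R1 := AddMonoidAlgebra.single (-2, 0) 1

/-- Generators of the DAHA of type `A₁`: `T, T⁻¹, X, X⁻¹, Y, Y⁻¹`. -/
inductive A1gen : Type
  | t | ti | x | xi | y | yi

open FreeAlgebra in
/-- The defining relations of the DAHA of type `A₁`. -/
inductive A1rel : FreeAlgebra R1 A1gen → FreeAlgebra R1 A1gen → Prop
  | tti : A1rel (ι R1 A1gen.t * ι R1 A1gen.ti) 1
  | tit : A1rel (ι R1 A1gen.ti * ι R1 A1gen.t) 1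
  | xxi : A1rel (ι R1 A1gen.x * ι R1 A1gen.xi) 1
  | xix : A1rel (ι R1 A1gen.xi * ι R1 A1gen.x) 1
  | yyi : A1rel (ι R1 A1gen.y * ι R1 A1gen.yi) 1
  | yiy : A1rel (ι R1 A1gen.yi * ι R1 A1gen.y) 1
  | hecke : A1rel ((ι R1 A1gen.t - algebraMap R1 _ R1.t2) *
      (ι R1 A1gen.t + algebraMap R1 _ R1.t2i)) 0
  | txt : A1rel (ι R1 A1gen.t * ι R1 A1gen.x * ι R1 A1gen.t) (ι R1 A1gen.xi)
  | tiyti : A1rel (ι R1 A1gen.ti * ι R1 A1gen.y * ι R1 A1gen.ti) (ι R1 A1gen.yi)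
  | cross : A1rel (ι R1 A1gen.yi * ι R1 A1gen.xi * ι R1 A1gen.y * ι R1 A1gen.x *
      ι R1 A1gen.t * ι R1 A1gen.t * algebraMap R1 _ R1.q2) 1

/-- The DAHA of type `A₁`. -/
abbrev HA1 : Type := RingQuot A1rel

namespace HA1

def T : HA1 := RingQuot.mkAlgHom R1 A1rel (FreeAlgebra.ι R1 A1gen.t)
def Ti : HA1 := RingQuot.mkAlgHom R1 A1rel (FreeAlgebra.ι R1 A1gen.ti)
def X : HA1 := RingQuot.mkAlgHom R1 A1rel (FreeAlgebra.ι R1 A1gen.x)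
def Xi : HA1 := RingQuot.mkAlgHom R1 A1rel (FreeAlgebra.ι R1 A1gen.xi)
def Y : HA1 := RingQuot.mkAlgHom R1 A1rel (FreeAlgebra.ι R1 A1gen.y)
def Yi : HA1 := RingQuot.mkAlgHom R1 A1rel (FreeAlgebra.ι R1 A1gen.yi)

/-- image of a base-ring element in `H^{A₁}` -/
def c (r : R1) : HA1 := algebraMap R1 HA1 r

end HA1

open HA1

/-- Generators `U₀, U₁, V₀, V₁` of the specialized `C∨C₁` DAHA. -/
inductive Cgen : Type
  | u0 | u1 | v0 | v1

open FreeAlgebra in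
/-- Defining relations of the specialized DAHA `H^{sp}` of type `C∨C₁`
(parameters `u₁ = t`, `u₀ = v₀ = v₁ = 1`). -/
inductive SpRel : FreeAlgebra R1 Cgen → FreeAlgebra R1 Cgen → Prop
  | heckeU1 : SpRel ((ι R1 Cgen.u1 - algebraMap R1 _ R1.t2) *
      (ι R1 Cgen.u1 + algebraMap R1 _ R1.t2i)) 0
  | u0sq : SpRel (ι R1 Cgen.u0 * ι R1 Cgen.u0) 1
  | v0sq : SpRel (ι R1 Cgen.v0 * ι R1 Cgen.v0) 1
  | v1sq : SpRel (ι R1 Cgen.v1 * ι R1 Cgen.v1) 1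
  | unit : SpRel (algebraMap R1 _ R1.q4 * ι R1 Cgen.v1 * ι R1 Cgen.v0 *
      ι R1 Cgen.u0 * ι R1 Cgen.u1) 1

/-- The specialized DAHA of type `C∨C₁`. -/
abbrev Hsp : Type := RingQuot SpRel

namespace Hsp

def U0 : Hsp := RingQuot.mkAlgHom R1 SpRel (FreeAlgebra.ι R1 Cgen.u0)
def U1 : Hsp := RingQuot.mkAlgHom R1 SpRel (FreeAlgebra.ι R1 Cgen.u1)
def V0 : Hsp := RingQuot.mkAlgHom R1 SpRel (FreeAlgebra.ι R1 Cgen.v0)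
def V1 : Hsp := RingQuot.mkAlgHom R1 SpRel (FreeAlgebra.ι R1 Cgen.v1)

/-- `U₁⁻¹ = U₁ − t^{1/2} + t^{−1/2}` -/
def U1i : Hsp := U1 - algebraMap R1 Hsp R1.t2 + algebraMap R1 Hsp R1.t2i
/-- `V₁⁻¹ = V₁ − v₁^{1/2} + v₁^{−1/2} = V₁` (here `v₁ = 1`) -/
def V1i : Hsp := V1
/-- `𝕏 = V₁⁻¹·U₁⁻¹` -/
def XX : Hsp := V1i * U1i
/-- `𝕐 = U₀·U₁` -/
def YY : Hsp := U0 * U1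

end Hsp


namespace DahaAux

open HA1

/- ## Scalar facts in `R1` -/

lemma r_tt : R1.t2 * R1.t2i = (1 : R1) := by
  simp [R1.t2, R1.t2i, AddMonoidAlgebra.single_mul_single, AddMonoidAlgebra.one_def]
  rfl

lemma r_q44 : R1.q4 * R1.q4 = R1.q2 := by
  simp [R1.q4, R1.q2, AddMonoidAlgebra.single_mul_single]

lemma r_q22 : R1.q2 * R1.q2i = (1 : R1) := by
  simp [R1.q2, R1.q2i, AddMonoidAlgebra.single_mul_single, AddMonoidAlgebra.one_def]
  rfl

lemma r_unit : R1.q4 * (R1.q4 * R1.q2i) = (1 : R1) := by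
  rw [← mul_assoc, r_q44, r_q22]

/- ## Lemmas about central scalars in `HA1` -/

lemma c_def (r : R1) : algebraMap R1 HA1 r = c r := rfl

lemma c_mul (r s : R1) : c r * c s = c (r * s) := by
  simp [HA1.c, map_mul]

lemma c_one : c (1 : R1) = 1 := map_one (algebraMap R1 HA1)

lemma mul_c (x : HA1) (r : R1) : x * c r = c r * x := (Algebra.commutes r x).symm

lemma c_mid (r : R1) (x y : HA1) : x * (c r * y) = c r * (x * y) := by
  rw [← mul_assoc, mul_c, mul_assoc]

lemma c_c (r s : R1) (x : HA1) : c r * (c s * x) = c (r * s) * x := by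
  rw [← mul_assoc, c_mul]

/- ## The defining relations, in `HA1` -/

lemma rel_tti : T * Ti = 1 := by
  have h := RingQuot.mkAlgHom_rel R1 A1rel.tti
  rw [map_mul, map_one] at h; exact h

lemma rel_tit : Ti * T = 1 := by
  have h := RingQuot.mkAlgHom_rel R1 A1rel.tit
  rw [map_mul, map_one] at h; exact h

lemma rel_xxi : X * Xi = 1 := by
  have h := RingQuot.mkAlgHom_rel R1 A1rel.xxi
  rw [map_mul, map_one] at h; exact h

lemma rel_xix : Xi * X = 1 := by
  have h := RingQuot.mkAlgHom_rel R1 A1rel.xix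
  rw [map_mul, map_one] at h; exact h

lemma rel_yyi : Y * Yi = 1 := by
  have h := RingQuot.mkAlgHom_rel R1 A1rel.yyi
  rw [map_mul, map_one] at h; exact h

lemma rel_yiy : Yi * Y = 1 := by
  have h := RingQuot.mkAlgHom_rel R1 A1rel.yiy
  rw [map_mul, map_one] at h; exact h

lemma rel_hecke : (T - c R1.t2) * (T + c R1.t2i) = 0 := by
  have h := RingQuot.mkAlgHom_rel R1 A1rel.hecke
  rw [map_mul, map_sub, map_add, map_zero, AlgHom.commutes, AlgHom.commutes] at h
  exact h

lemma rel_txt : T * X * T = Xi := by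
  have h := RingQuot.mkAlgHom_rel R1 A1rel.txt
  rw [map_mul, map_mul] at h; exact h

lemma rel_tiyti : Ti * Y * Ti = Yi := by
  have h := RingQuot.mkAlgHom_rel R1 A1rel.tiyti
  rw [map_mul, map_mul] at h; exact h

lemma rel_cross : Yi * Xi * Y * X * T * T * c R1.q2 = 1 := by
  have h := RingQuot.mkAlgHom_rel R1 A1rel.cross
  rw [map_mul, map_mul, map_mul, map_mul, map_mul, map_mul, map_one,
    AlgHom.commutes] at h
  exact h

/- ## Right-associated ("continuation") forms of the relations -/

lemma tTi (z : HA1) : T * (Ti * z) = z := by rw [← mul_assoc, rel_tti, one_mul]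
lemma tiT (z : HA1) : Ti * (T * z) = z := by rw [← mul_assoc, rel_tit, one_mul]
lemma xXi (z : HA1) : X * (Xi * z) = z := by rw [← mul_assoc, rel_xxi, one_mul]
lemma xiX (z : HA1) : Xi * (X * z) = z := by rw [← mul_assoc, rel_xix, one_mul]
lemma yYi (z : HA1) : Y * (Yi * z) = z := by rw [← mul_assoc, rel_yyi, one_mul]
lemma yiY (z : HA1) : Yi * (Y * z) = z := by rw [← mul_assoc, rel_yiy, one_mul]

lemma tiyti' (z : HA1) : Ti * (Y * (Ti * z)) = Yi * z := by
  calc Ti * (Y * (Ti * z)) = (Ti * Y * Ti) * z := by rw [mul_assoc, mul_assoc]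
    _ = Yi * z := by rw [rel_tiyti]

lemma tiyti0 : Ti * (Y * Ti) = Yi := by
  have h := tiyti' 1
  simpa using h

lemma txt' (z : HA1) : T * (X * (T * z)) = Xi * z := by
  calc T * (X * (T * z)) = (T * X * T) * z := by rw [mul_assoc, mul_assoc]
    _ = Xi * z := by rw [rel_txt]

lemma txt0 : T * (X * T) = Xi := by
  have h := txt' 1
  simpa using h

lemma tixiti' (z : HA1) : Ti * (Xi * (Ti * z)) = X * z := by
  conv_lhs => rw [← rel_txt]
  rw [mul_assoc, mul_assoc]
  rw [tiT]
  rw [tTi]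

lemma tixiti0 : Ti * (Xi * Ti) = X := by
  have h := tixiti' 1
  simpa using h

/- ## Consequences of the cross relation -/

lemma cross_s1 (z : HA1) : Xi * (Y * (X * (T * (T * (c R1.q2 * z))))) = Y * z := by
  have e : Y * ((Yi * Xi * Y * X * T * T * c R1.q2) * z)
      = Xi * (Y * (X * (T * (T * (c R1.q2 * z))))) := by
    simp only [mul_assoc]
    rw [yYi]
  rw [rel_cross, one_mul] at e
  exact e.symm

lemma xiY (z : HA1) : Xi * (Y * z) = c R1.q2i * (Y * (Ti * (Ti * (Xi * z)))) := by
  have h := cross_s1 (c R1.q2i * (Ti * (Ti * (Xi * z))))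
  rw [c_c, r_q22, c_one, one_mul, tTi, tTi, xXi] at h
  rw [h, c_mid]

lemma xiY0 : Xi * Y = c R1.q2i * (Y * (Ti * (Ti * Xi))) := by
  have h := xiY 1
  simpa using h

/- ## Hecke consequence -/

lemma hecke_key : T * (T - c R1.t2 + c R1.t2i) = 1 := by
  have h := rel_hecke
  have hc : c R1.t2 * c R1.t2i = 1 := by rw [c_mul, r_tt, c_one]
  have hcm : T * c R1.t2 = c R1.t2 * T := mul_c T R1.t2
  rw [sub_mul T (c R1.t2) (T + c R1.t2i), mul_add T T (c R1.t2i),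
    mul_add (c R1.t2) T (c R1.t2i), hc] at h
  have h3 : T * T + T * c R1.t2i = c R1.t2 * T + 1 := eq_of_sub_eq_zero h
  rw [mul_add T (T - c R1.t2) (c R1.t2i), mul_sub T T (c R1.t2), hcm,
    sub_add_eq_add_sub (T * T) (c R1.t2 * T) (T * c R1.t2i), h3,
    add_sub_cancel_left (c R1.t2 * T) 1]

/- ## The homomorphism -/

def fgen : Cgen → HA1
  | .u1 => T
  | .u0 => Y * Ti
  | .v0 => c R1.q4 * (Y * (Ti * Xi))
  | .v1 => X * T

lemma lift_rel : ∀ ⦃a b : FreeAlgebra R1 Cgen⦄, SpRel a b →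
    FreeAlgebra.lift R1 fgen a = FreeAlgebra.lift R1 fgen b := by
  intro a b h
  induction h with
  | heckeU1 =>
    simp only [map_mul, map_sub, map_add, map_zero, FreeAlgebra.lift_ι_apply,
      AlgHom.commutes, c_def]
    exact rel_hecke
  | u0sq =>
    simp only [map_mul, map_one, FreeAlgebra.lift_ι_apply]
    show (Y * Ti) * (Y * Ti) = 1
    rw [mul_assoc, tiyti0, rel_yyi]
  | v0sq =>
    simp only [map_mul, map_one, FreeAlgebra.lift_ι_apply]
    show (c R1.q4 * (Y * (Ti * Xi))) * (c R1.q4 * (Y * (Ti * Xi))) = 1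
    have A : Y * (Ti * (Xi * (Y * (Ti * Xi)))) = c R1.q2i := by
      rw [xiY, c_mid, c_mid, tiyti', yYi, tixiti', rel_xxi, mul_one]
    simp only [mul_assoc]
    rw [c_mid, c_mid, c_mid, c_c, r_q44, A, c_mul, r_q22, c_one]
  | v1sq =>
    simp only [map_mul, map_one, FreeAlgebra.lift_ι_apply]
    show (X * T) * (X * T) = 1
    rw [mul_assoc, txt0, rel_xxi]
  | unit =>
    simp only [map_mul, map_one, FreeAlgebra.lift_ι_apply, AlgHom.commutes, c_def]
    show c R1.q4 * (X * T) * (c R1.q4 * (Y * (Ti * Xi))) * (Y * Ti) * T = 1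
    simp only [mul_assoc]
    rw [rel_tit, mul_one, xiY0, c_mid R1.q2i Ti, c_mid R1.q2i Y, c_c,
      c_mid _ T, c_mid _ X, c_c, r_unit, c_one, one_mul,
      tiyti', yYi, tTi, rel_xxi]

def xi0 : Hsp →ₐ[R1] HA1 :=
  RingQuot.liftAlgHom R1 ⟨FreeAlgebra.lift R1 fgen, lift_rel⟩

lemma xi0_U1 : xi0 Hsp.U1 = T := by
  simp [xi0, Hsp.U1, RingQuot.liftAlgHom_mkAlgHom_apply, fgen]

lemma xi0_U0 : xi0 Hsp.U0 = Y * Ti := by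
  simp [xi0, Hsp.U0, RingQuot.liftAlgHom_mkAlgHom_apply, fgen]

lemma xi0_V0 : xi0 Hsp.V0 = c R1.q4 * Y * Ti * Xi := by
  have : xi0 Hsp.V0 = c R1.q4 * (Y * (Ti * Xi)) := by
    simp [xi0, Hsp.V0, RingQuot.liftAlgHom_mkAlgHom_apply, fgen]
  rw [this, mul_assoc, mul_assoc]

lemma xi0_V1 : xi0 Hsp.V1 = X * T := by
  simp [xi0, Hsp.V1, RingQuot.liftAlgHom_mkAlgHom_apply, fgen]

lemma uniq (ξ : Hsp →ₐ[R1] HA1)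
    (h1 : ξ Hsp.U1 = T) (h2 : ξ Hsp.U0 = Y * Ti)
    (h3 : ξ Hsp.V0 = c R1.q4 * Y * Ti * Xi) (h4 : ξ Hsp.V1 = X * T) :
    ξ = xi0 := by
  apply RingQuot.ringQuot_ext'
  apply FreeAlgebra.hom_ext
  funext g
  cases g with
  | u0 =>
    show ξ Hsp.U0 = xi0 Hsp.U0
    rw [h2, xi0_U0]
  | u1 =>
    show ξ Hsp.U1 = xi0 Hsp.U1
    rw [h1, xi0_U1]
  | v0 =>
    show ξ Hsp.V0 = xi0 Hsp.V0
    rw [h3, xi0_V0]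
  | v1 =>
    show ξ Hsp.V1 = xi0 Hsp.V1
    rw [h4, xi0_V1]

end DahaAux

/-- there is a unique `R₁`-algebra homomorphism `ξ : H^{sp} → H^{A₁}` with
`ξ(U₁) = T`, `ξ(U₀) = Y·T⁻¹`, `ξ(V₀) = q^{1/4}·Y·T⁻¹·X⁻¹`, `ξ(V₁) = X·T`; moreover
`ξ(𝕏) = X` and `ξ(𝕐) = Y`. -/
theorem statement1 :
    (∃! ξ : Hsp →ₐ[R1] HA1,
      ξ Hsp.U1 = T ∧ ξ Hsp.U0 = Y * Ti ∧
      ξ Hsp.V0 = c R1.q4 * Y * Ti * Xi ∧ ξ Hsp.V1 = X * T) ∧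
    (∀ ξ : Hsp →ₐ[R1] HA1,
      (ξ Hsp.U1 = T ∧ ξ Hsp.U0 = Y * Ti ∧
       ξ Hsp.V0 = c R1.q4 * Y * Ti * Xi ∧ ξ Hsp.V1 = X * T) →
      ξ Hsp.XX = X ∧ ξ Hsp.YY = Y) := by
  constructor
  · refine ⟨DahaAux.xi0, ⟨DahaAux.xi0_U1, DahaAux.xi0_U0, DahaAux.xi0_V0, DahaAux.xi0_V1⟩,
      fun ξ h => DahaAux.uniq ξ h.1 h.2.1 h.2.2.1 h.2.2.2⟩
  · rintro ξ ⟨h1, h2, h3, h4⟩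
    constructor
    · rw [Hsp.XX, Hsp.V1i, Hsp.U1i, map_mul, map_add,
        map_sub ξ Hsp.U1 ((algebraMap R1 Hsp) R1.t2), h4, h1,
        AlgHom.commutes, AlgHom.commutes]
      simp only [DahaAux.c_def]
      rw [mul_assoc, DahaAux.hecke_key, mul_one]
    · rw [Hsp.YY, map_mul, h2, h1, mul_assoc, DahaAux.rel_tit, mul_one]
end
end

section
/- There exists a unique R₁-algebra homomorphism ζ : H^{(2)} → H^{A₁} with ζ(U₁) = T, ζ(U₀) = Y²·T⁻¹, ζ(V₀) = q^{1/4}·Y·T⁻¹·X⁻¹ and ζ(V₁) = q^{1/4}·X·T·Y. Moreover ζ(𝕏) = q^{−1/4}·Y⁻¹·X and ζ(𝕐) = Y², where 𝕏 = V₁⁻¹·U₁⁻¹ and 𝕐 = U₀·U₁ in H^{(2)}. -/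
noncomputable section

open HA1

open FreeAlgebra in
/-- Defining relations of `H^{(2)}`, the `C∨C₁` DAHA with `q` replaced by `q²` and
parameters `u₀ = u₁ = t`, `v₀ = v₁ = 1`. -/
inductive H2Rel : FreeAlgebra R1 Cgen → FreeAlgebra R1 Cgen → Prop
  | heckeU0 : H2Rel ((ι R1 Cgen.u0 - algebraMap R1 _ R1.t2) *
      (ι R1 Cgen.u0 + algebraMap R1 _ R1.t2i)) 0
  | heckeU1 : H2Rel ((ι R1 Cgen.u1 - algebraMap R1 _ R1.t2) *
      (ι R1 Cgen.u1 + algebraMap R1 _ R1.t2i)) 0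
  | v0sq : H2Rel (ι R1 Cgen.v0 * ι R1 Cgen.v0) 1
  | v1sq : H2Rel (ι R1 Cgen.v1 * ι R1 Cgen.v1) 1
  | unit : H2Rel (algebraMap R1 _ R1.q2 * ι R1 Cgen.v1 * ι R1 Cgen.v0 *
      ι R1 Cgen.u0 * ι R1 Cgen.u1) 1

/-- The DAHA `H^{(2)}`. -/
abbrev H2 : Type := RingQuot H2Rel

namespace H2

def U0 : H2 := RingQuot.mkAlgHom R1 H2Rel (FreeAlgebra.ι R1 Cgen.u0)
def U1 : H2 := RingQuot.mkAlgHom R1 H2Rel (FreeAlgebra.ι R1 Cgen.u1)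
def V0 : H2 := RingQuot.mkAlgHom R1 H2Rel (FreeAlgebra.ι R1 Cgen.v0)
def V1 : H2 := RingQuot.mkAlgHom R1 H2Rel (FreeAlgebra.ι R1 Cgen.v1)

/-- `U₁⁻¹ = U₁ − t^{1/2} + t^{−1/2}` -/
def U1i : H2 := U1 - algebraMap R1 H2 R1.t2 + algebraMap R1 H2 R1.t2i
/-- `U₀⁻¹ = U₀ − t^{1/2} + t^{−1/2}` -/
def U0i : H2 := U0 - algebraMap R1 H2 R1.t2 + algebraMap R1 H2 R1.t2i
/-- `V₁⁻¹ = V₁` (here `v₁ = 1`) -/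
def V1i : H2 := V1
/-- `𝕏 = V₁⁻¹·U₁⁻¹` -/
def XX : H2 := V1i * U1i
/-- `𝕐 = U₀·U₁` -/
def YY : H2 := U0 * U1

end H2

section Aux

namespace R1aux

lemma t2_t2i : R1.t2 * R1.t2i = 1 := by
  simp [R1.t2, R1.t2i, AddMonoidAlgebra.single_mul_single, AddMonoidAlgebra.one_def, Prod.mk_zero_zero]

lemma q2_q2i : R1.q2 * R1.q2i = 1 := by
  simp [R1.q2, R1.q2i, AddMonoidAlgebra.single_mul_single, AddMonoidAlgebra.one_def, Prod.mk_zero_zero]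

lemma q2i_q2 : R1.q2i * R1.q2 = 1 := by
  simp [R1.q2, R1.q2i, AddMonoidAlgebra.single_mul_single, AddMonoidAlgebra.one_def, Prod.mk_zero_zero]

lemma q4_q4 : R1.q4 * R1.q4 = R1.q2 := by
  simp [R1.q4, R1.q2, AddMonoidAlgebra.single_mul_single]

lemma q4_q2i : R1.q4 * R1.q2i = R1.q4i := by
  simp [R1.q4, R1.q2i, R1.q4i, AddMonoidAlgebra.single_mul_single]

end R1aux

namespace HA1

lemma c_def (r : R1) : algebraMap R1 HA1 r = c r := rfl
lemma c_one : c 1 = 1 := map_one (algebraMap R1 HA1)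
lemma c_mul (r s : R1) : c r * c s = c (r * s) := (map_mul (algebraMap R1 HA1) r s).symm
lemma c_comm (r : R1) (x : HA1) : x * c r = c r * x := (Algebra.commutes r x).symm
lemma c_move (r : R1) (x y : HA1) : x * (c r * y) = c r * (x * y) := by
  rw [← mul_assoc, c_comm, mul_assoc]

lemma rTTi : T * Ti = 1 := by
  have h := RingQuot.mkAlgHom_rel R1 A1rel.tti
  rw [map_mul, map_one] at h; exact h

lemma rTiT : Ti * T = 1 := by
  have h := RingQuot.mkAlgHom_rel R1 A1rel.tit
  rw [map_mul, map_one] at h; exact h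

lemma rXXi : X * Xi = 1 := by
  have h := RingQuot.mkAlgHom_rel R1 A1rel.xxi
  rw [map_mul, map_one] at h; exact h

lemma rXiX : Xi * X = 1 := by
  have h := RingQuot.mkAlgHom_rel R1 A1rel.xix
  rw [map_mul, map_one] at h; exact h

lemma rYYi : Y * Yi = 1 := by
  have h := RingQuot.mkAlgHom_rel R1 A1rel.yyi
  rw [map_mul, map_one] at h; exact h

lemma rYiY : Yi * Y = 1 := by
  have h := RingQuot.mkAlgHom_rel R1 A1rel.yiy
  rw [map_mul, map_one] at h; exact h

lemma rHecke : (T - c R1.t2) * (T + c R1.t2i) = 0 := by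
  have h := RingQuot.mkAlgHom_rel R1 A1rel.hecke
  rw [map_mul, map_sub, map_add, map_zero, AlgHom.commutes, AlgHom.commutes] at h
  exact h

lemma rTXT : T * X * T = Xi := by
  have h := RingQuot.mkAlgHom_rel R1 A1rel.txt
  rw [map_mul, map_mul] at h; exact h

lemma rTiYTi : Ti * Y * Ti = Yi := by
  have h := RingQuot.mkAlgHom_rel R1 A1rel.tiyti
  rw [map_mul, map_mul] at h; exact h

lemma rCross : Yi * Xi * Y * X * T * T * c R1.q2 = 1 := by
  have h := RingQuot.mkAlgHom_rel R1 A1rel.cross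
  simp only [map_mul, map_one, AlgHom.commutes] at h
  exact h

lemma cancel_of {a b : HA1} (h : a * b = 1) (x : HA1) : a * (b * x) = x := by
  rw [← mul_assoc, h, one_mul]

lemma aTTi (x : HA1) : T * (Ti * x) = x := cancel_of rTTi x
lemma aTiT (x : HA1) : Ti * (T * x) = x := cancel_of rTiT x
lemma aXXi (x : HA1) : X * (Xi * x) = x := cancel_of rXXi x
lemma aXiX (x : HA1) : Xi * (X * x) = x := cancel_of rXiX x
lemma aYYi (x : HA1) : Y * (Yi * x) = x := cancel_of rYYi x
lemma aYiY (x : HA1) : Yi * (Y * x) = x := cancel_of rYiY x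

lemma expand_key (A : HA1) : (A - c R1.t2) * (A + c R1.t2i)
    = A * A + A * c R1.t2i - c R1.t2 * A - c R1.t2 * c R1.t2i := by
  calc (A - c R1.t2) * (A + c R1.t2i)
      = A * (A + c R1.t2i) - c R1.t2 * (A + c R1.t2i) :=
        sub_mul A (c R1.t2) (A + c R1.t2i)
    _ = A * A + A * c R1.t2i - (c R1.t2 * A + c R1.t2 * c R1.t2i) := by
        rw [mul_add, mul_add]
    _ = A * A + A * c R1.t2i - c R1.t2 * A - c R1.t2 * c R1.t2i := by abel

lemma hecke_expand : T * T = c R1.t2 * T - c R1.t2i * T + 1 := by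
  have key := expand_key T
  have h := rHecke
  rw [key, c_comm, c_mul, R1aux.t2_t2i, c_one] at h
  have h2 : T * T + c R1.t2i * T - c R1.t2 * T = (1 : HA1) := sub_eq_zero.mp h
  rw [show (1 : HA1) = T * T + c R1.t2i * T - c R1.t2 * T from h2.symm]
  abel

lemma T_eq : T = Ti + c R1.t2 - c R1.t2i := by
  have e1 : (c R1.t2 * T - c R1.t2i * T) * Ti
      = (c R1.t2 * T) * Ti - (c R1.t2i * T) * Ti :=
    sub_mul (c R1.t2 * T) (c R1.t2i * T) Ti
  have key : (c R1.t2 * T - c R1.t2i * T + 1) * Ti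
      = c R1.t2 * (T * Ti) - c R1.t2i * (T * Ti) + Ti := by
    rw [add_mul, e1, mul_assoc, mul_assoc, one_mul]
  have h : T * (T * Ti) = c R1.t2 * (T * Ti) - c R1.t2i * (T * Ti) + Ti := by
    rw [← mul_assoc, hecke_expand, key]
  rw [rTTi, mul_one, mul_one, mul_one] at h
  rw [h]; abel

lemma Ti_eq : Ti = T - c R1.t2 + c R1.t2i := by rw [T_eq]; abel

lemma YTi : Y * Ti = T * Yi := by
  have h : T * (Ti * Y * Ti) = T * Yi := by rw [rTiYTi]
  rwa [← mul_assoc, ← mul_assoc, rTTi, one_mul] at h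

lemma aYTi (x : HA1) : Y * (Ti * x) = T * (Yi * x) := by
  rw [← mul_assoc, YTi, mul_assoc]

lemma TiY : Ti * Y = Yi * T := by
  have h : Ti * Y * Ti * T = Yi * T := by rw [rTiYTi]
  rwa [mul_assoc, rTiT, mul_one] at h

lemma aTiY (x : HA1) : Ti * (Y * x) = Yi * (T * x) := by
  rw [← mul_assoc, TiY, mul_assoc]

lemma XT : X * T = Ti * Xi := by
  have h : Ti * (T * X * T) = Ti * Xi := by rw [rTXT]
  rwa [← mul_assoc, ← mul_assoc, rTiT, one_mul] at h

lemma TiXi : Ti * Xi = X * T := XT.symm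

lemma aTXT : T * (X * T) = Xi := by rw [← mul_assoc]; exact rTXT

lemma aTiYTi : Ti * (Y * Ti) = Yi := by rw [← mul_assoc]; exact rTiYTi

lemma crossq : Yi * Xi * Y * X * T * T = c R1.q2i := by
  have h : Yi * Xi * Y * X * T * T * c R1.q2 * c R1.q2i = 1 * c R1.q2i := by rw [rCross]
  rwa [mul_assoc, c_mul, R1aux.q2_q2i, c_one, mul_one, one_mul] at h

lemma core : Yi * (Xi * (Y * (X * T))) = c R1.q2i * Ti := by
  have h : Yi * Xi * Y * X * T * T * Ti = c R1.q2i * Ti := by rw [crossq]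
  rwa [mul_assoc, rTTi, mul_one, mul_assoc, mul_assoc, mul_assoc] at h

lemma YXT : Y * (X * T) = c R1.q2i * (X * (Y * Ti)) := by
  have h : X * (Y * (Yi * (Xi * (Y * (X * T))))) = X * (Y * (c R1.q2i * Ti)) := by
    rw [core]
  rwa [aYYi, aXXi, c_move, c_move] at h

lemma aYXT (x : HA1) : Y * (X * (T * x)) = c R1.q2i * (X * (Y * (Ti * x))) := by
  have h := congrArg (fun z => z * x) YXT
  simpa only [mul_assoc] using h

lemma XT2 : X * T = c R1.q2i * (Yi * (X * (Y * Ti))) := by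
  have h : Yi * (Y * (X * T)) = Yi * (c R1.q2i * (X * (Y * Ti))) := by rw [YXT]
  rwa [aYiY, c_move] at h

lemma XTTYi : X * (T * (T * Yi)) = c R1.q2i * (Yi * X) := by
  have h := congrArg (fun z => z * (T * Yi)) XT2
  simp only [mul_assoc] at h
  rwa [aTiT, rYYi, mul_one] at h

lemma hecke_of (A : HA1) (h : A * A = c R1.t2 * A - c R1.t2i * A + 1) :
    (A - c R1.t2) * (A + c R1.t2i) = 0 := by
  have key := expand_key A
  rw [key, c_comm, c_mul, R1aux.t2_t2i, c_one, h]
  abel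

lemma hU0sq : (Y * Y * Ti) * (Y * Y * Ti) =
    c R1.t2 * (Y * Y * Ti) - c R1.t2i * (Y * Y * Ti) + 1 := by
  have e1 : (Ti + c R1.t2 - c R1.t2i) * (Y * Ti)
      = (Ti + c R1.t2) * (Y * Ti) - c R1.t2i * (Y * Ti) :=
    sub_mul (Ti + c R1.t2) (c R1.t2i) (Y * Ti)
  have e2 : Y * (Ti * (Y * Ti) + c R1.t2 * (Y * Ti) - c R1.t2i * (Y * Ti))
      = Y * (Ti * (Y * Ti) + c R1.t2 * (Y * Ti)) - Y * (c R1.t2i * (Y * Ti)) :=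
    mul_sub Y (Ti * (Y * Ti) + c R1.t2 * (Y * Ti)) (c R1.t2i * (Y * Ti))
  have key : Y * ((Ti + c R1.t2 - c R1.t2i) * (Y * Ti))
      = Y * (Ti * (Y * Ti)) + Y * (c R1.t2 * (Y * Ti)) - Y * (c R1.t2i * (Y * Ti)) := by
    rw [e1, add_mul, e2, mul_add]
  simp only [mul_assoc]
  rw [aTiY (Y * Ti), aYYi, T_eq, key, aTiYTi, rYYi, c_move, c_move]
  abel

lemma V0sq : (c R1.q4 * Y * Ti * Xi) * (c R1.q4 * Y * Ti * Xi) = 1 := by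
  simp only [mul_assoc]
  rw [c_move, c_move, c_move, ← mul_assoc, c_mul, R1aux.q4_q4, TiXi,
    aYTi (Xi * (Y * (X * T))), core, c_move, rTTi, mul_one, c_mul, R1aux.q2_q2i, c_one]

lemma V1sq : (c R1.q4 * X * T * Y) * (c R1.q4 * X * T * Y) = 1 := by
  simp only [mul_assoc]
  rw [c_move, c_move, c_move, ← mul_assoc, c_mul, R1aux.q4_q4, aYXT Y, TiY,
    aYYi, c_move, aTXT, c_move, rXXi, mul_one, c_mul, R1aux.q2_q2i, c_one]

lemma v0v1 : (c R1.q4 * Y * Ti * Xi) * (c R1.q4 * X * T * Y) = c R1.q2 * (Y * Y) := by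
  simp only [mul_assoc]
  rw [c_move, c_move, c_move, ← mul_assoc, c_mul, R1aux.q4_q4, aXiX, aTiT]

lemma XXcomp : (c R1.q4 * X * T * Y) * Ti = c R1.q4i * Yi * X := by
  simp only [mul_assoc]
  rw [YTi, XTTYi, ← mul_assoc, c_mul, R1aux.q4_q2i]

lemma unit_helper (P Q u0 u1 R s si : HA1) (hssi : s * si = 1) (hsis : si * s = 1)
    (hQP : Q * P = s * R) (hU : u0 * u1 = R) (hQQ : Q * Q = 1) (hPP : P * P = 1)
    (hscomm : ∀ x : HA1, x * si = si * x) :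
    s * P * Q * u0 * u1 = 1 := by
  have h1 : u0 * u1 = si * (Q * P) := by rw [hU, hQP, ← mul_assoc, hsis, one_mul]
  calc s * P * Q * u0 * u1 = s * (P * (Q * (u0 * u1))) := by
        rw [mul_assoc, mul_assoc, mul_assoc]
    _ = s * (P * (Q * (si * (Q * P)))) := by rw [h1]
    _ = s * (P * (si * (Q * (Q * P)))) := by rw [← mul_assoc Q si, hscomm, mul_assoc]
    _ = s * (P * (si * P)) := by rw [← mul_assoc Q Q, hQQ, one_mul]
    _ = s * (si * (P * P)) := by rw [← mul_assoc P si, hscomm, mul_assoc]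
    _ = 1 := by rw [hPP, mul_one, hssi]

end HA1

/-- the images of the generators of `H^{(2)}` -/
def fgen : Cgen → HA1
  | Cgen.u0 => Y * Y * Ti
  | Cgen.u1 => T
  | Cgen.v0 => c R1.q4 * Y * Ti * Xi
  | Cgen.v1 => c R1.q4 * X * T * Y

open HA1 in
lemma hrel : ∀ ⦃x y : FreeAlgebra R1 Cgen⦄, H2Rel x y →
    (FreeAlgebra.lift R1 fgen) x = (FreeAlgebra.lift R1 fgen) y := by
  intro x y h
  induction h with
  | heckeU0 =>
    simp only [map_mul, map_sub, map_add, map_zero, AlgHom.commutes,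
      FreeAlgebra.lift_ι_apply, fgen, c_def]
    exact hecke_of _ hU0sq
  | heckeU1 =>
    simp only [map_mul, map_sub, map_add, map_zero, AlgHom.commutes,
      FreeAlgebra.lift_ι_apply, fgen, c_def]
    exact hecke_of _ hecke_expand
  | v0sq =>
    simp only [map_mul, map_one, FreeAlgebra.lift_ι_apply, fgen]
    exact V0sq
  | v1sq =>
    simp only [map_mul, map_one, FreeAlgebra.lift_ι_apply, fgen]
    exact V1sq
  | unit =>
    simp only [map_mul, map_one, AlgHom.commutes, FreeAlgebra.lift_ι_apply, fgen, c_def]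
    refine unit_helper _ _ _ _ (Y * Y) _ (c R1.q2i) ?_ ?_ v0v1 ?_ V0sq V1sq
      (fun x => c_comm _ x)
    · rw [c_mul, R1aux.q2_q2i, c_one]
    · rw [c_mul, R1aux.q2i_q2, c_one]
    · rw [mul_assoc, rTiT, mul_one]

/-- the homomorphism `ζ` -/
def zeta : H2 →ₐ[R1] HA1 := RingQuot.liftAlgHom R1 ⟨FreeAlgebra.lift R1 fgen, hrel⟩

lemma zeta_gen (g : Cgen) :
    zeta (RingQuot.mkAlgHom R1 H2Rel (FreeAlgebra.ι R1 g)) = fgen g := by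
  unfold zeta
  rw [RingQuot.liftAlgHom_mkAlgHom_apply, FreeAlgebra.lift_ι_apply]

lemma hom_ext {ζ₁ ζ₂ : H2 →ₐ[R1] HA1}
    (h0 : ζ₁ H2.U0 = ζ₂ H2.U0) (h1 : ζ₁ H2.U1 = ζ₂ H2.U1)
    (h2 : ζ₁ H2.V0 = ζ₂ H2.V0) (h3 : ζ₁ H2.V1 = ζ₂ H2.V1) : ζ₁ = ζ₂ := by
  apply RingQuot.ringQuot_ext'
  apply FreeAlgebra.hom_ext
  funext g
  cases g
  · exact h0
  · exact h1
  · exact h2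
  · exact h3

end Aux

/-- there is a unique `R₁`-algebra homomorphism `ζ : H^{(2)} → H^{A₁}` with
`ζ(U₁) = T`, `ζ(U₀) = Y²·T⁻¹`, `ζ(V₀) = q^{1/4}·Y·T⁻¹·X⁻¹`, `ζ(V₁) = q^{1/4}·X·T·Y`;
moreover `ζ(𝕏) = q^{−1/4}·Y⁻¹·X` and `ζ(𝕐) = Y²`. -/
theorem statement3 :
    (∃! ζ : H2 →ₐ[R1] HA1,
      ζ H2.U1 = T ∧ ζ H2.U0 = Y * Y * Ti ∧
      ζ H2.V0 = c R1.q4 * Y * Ti * Xi ∧ ζ H2.V1 = c R1.q4 * X * T * Y) ∧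
    (∀ ζ : H2 →ₐ[R1] HA1,
      (ζ H2.U1 = T ∧ ζ H2.U0 = Y * Y * Ti ∧
       ζ H2.V0 = c R1.q4 * Y * Ti * Xi ∧ ζ H2.V1 = c R1.q4 * X * T * Y) →
      ζ H2.XX = c R1.q4i * Yi * X ∧ ζ H2.YY = Y * Y) := by
  have hvals : zeta H2.U1 = T ∧ zeta H2.U0 = Y * Y * Ti ∧
      zeta H2.V0 = c R1.q4 * Y * Ti * Xi ∧ zeta H2.V1 = c R1.q4 * X * T * Y :=
    ⟨zeta_gen Cgen.u1, zeta_gen Cgen.u0, zeta_gen Cgen.v0, zeta_gen Cgen.v1⟩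
  constructor
  · refine ⟨zeta, hvals, ?_⟩
    rintro ζ' ⟨a1, a2, a3, a4⟩
    exact hom_ext (a2.trans hvals.2.1.symm) (a1.trans hvals.1.symm)
      (a3.trans hvals.2.2.1.symm) (a4.trans hvals.2.2.2.symm)
  · rintro ζ' ⟨a1, a2, a3, a4⟩
    constructor
    · have e1 : H2.XX = H2.V1 * (H2.U1 - algebraMap R1 H2 R1.t2 +
          algebraMap R1 H2 R1.t2i) := rfl
      have hsub : ζ' (H2.U1 - algebraMap R1 H2 R1.t2)
          = ζ' H2.U1 - ζ' (algebraMap R1 H2 R1.t2) :=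
        map_sub ζ' H2.U1 (algebraMap R1 H2 R1.t2)
      rw [e1, map_mul, map_add, hsub, AlgHom.commutes, AlgHom.commutes, a1, a4,
        c_def, c_def]
      show (c R1.q4 * X * T * Y) * (T - c R1.t2 + c R1.t2i) = c R1.q4i * Yi * X
      rw [← Ti_eq]
      exact XXcomp
    · have e2 : H2.YY = H2.U0 * H2.U1 := rfl
      rw [e2, map_mul, a2, a1, mul_assoc, rTiT, mul_one]
end
end

section
/- Let θ₊ be the ring automorphism of R that interchanges u₀^{1/2} and v₀^{1/2} and fixes q^{1/4}, u₁^{1/2}, v₁^{1/2}. There exists a unique ring automorphism τ₊ of H, semilinear over θ₊, with τ₊(U₁) = U₁, τ₊(V₁) = V₁, τ₊(U₀) = q^{−1/4}·𝕏·U₀⁻¹ (= V₀) and τ₊(V₀) = q^{−1/4}·𝕏·V₀⁻¹. It satisfies τ₊(𝕏) = 𝕏 and τ₊(𝕐) = V₀·U₁ = q^{−1/4}·V₁⁻¹·𝕐⁻¹·U₁. -/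
noncomputable section

/-- The base ring `R = ℤ[q^{±1/4}, u₀^{±1/2}, u₁^{±1/2}, v₀^{±1/2}, v₁^{±1/2}]`:
the group algebra over `ℤ` of the free abelian group on five generators, where the
exponents record the variables `(q^{1/4}, u₀^{1/2}, u₁^{1/2}, v₀^{1/2}, v₁^{1/2})`. -/
abbrev R5 : Type := AddMonoidAlgebra ℤ (ℤ × ℤ × ℤ × ℤ × ℤ)

namespace R5
/-- `q^{1/4}` -/
def q4 : R5 := AddMonoidAlgebra.single (1, 0, 0, 0, 0) 1
/-- `q^{-1/4}` -/
def q4i : R5 := AddMonoidAlgebra.single (-1, 0, 0, 0, 0) 1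
/-- `u₀^{1/2}` -/
def u0h : R5 := AddMonoidAlgebra.single (0, 1, 0, 0, 0) 1
def u0hi : R5 := AddMonoidAlgebra.single (0, -1, 0, 0, 0) 1
/-- `u₁^{1/2}` -/
def u1h : R5 := AddMonoidAlgebra.single (0, 0, 1, 0, 0) 1
def u1hi : R5 := AddMonoidAlgebra.single (0, 0, -1, 0, 0) 1
/-- `v₀^{1/2}` -/
def v0h : R5 := AddMonoidAlgebra.single (0, 0, 0, 1, 0) 1
def v0hi : R5 := AddMonoidAlgebra.single (0, 0, 0, -1, 0) 1
/-- `v₁^{1/2}` -/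
def v1h : R5 := AddMonoidAlgebra.single (0, 0, 0, 0, 1) 1
def v1hi : R5 := AddMonoidAlgebra.single (0, 0, 0, 0, -1) 1
end R5

open FreeAlgebra in
/-- The defining relations of the DAHA of type `C∨C₁`:
`(U_i − u_i^{1/2})(U_i + u_i^{−1/2}) = 0`, `(V_i − v_i^{1/2})(V_i + v_i^{−1/2}) = 0`
for `i = 0, 1`, and `q^{1/4}·V₁·V₀·U₀·U₁ = 1`. -/
inductive Crel : FreeAlgebra R5 Cgen → FreeAlgebra R5 Cgen → Prop
  | heckeU0 : Crel ((ι R5 Cgen.u0 - algebraMap R5 _ R5.u0h) *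
      (ι R5 Cgen.u0 + algebraMap R5 _ R5.u0hi)) 0
  | heckeU1 : Crel ((ι R5 Cgen.u1 - algebraMap R5 _ R5.u1h) *
      (ι R5 Cgen.u1 + algebraMap R5 _ R5.u1hi)) 0
  | heckeV0 : Crel ((ι R5 Cgen.v0 - algebraMap R5 _ R5.v0h) *
      (ι R5 Cgen.v0 + algebraMap R5 _ R5.v0hi)) 0
  | heckeV1 : Crel ((ι R5 Cgen.v1 - algebraMap R5 _ R5.v1h) *
      (ι R5 Cgen.v1 + algebraMap R5 _ R5.v1hi)) 0
  | unit : Crel (algebraMap R5 _ R5.q4 * ι R5 Cgen.v1 * ι R5 Cgen.v0 *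
      ι R5 Cgen.u0 * ι R5 Cgen.u1) 1

/-- The DAHA of type `C∨C₁`. -/
abbrev H : Type := RingQuot Crel

namespace H

def U0 : H := RingQuot.mkAlgHom R5 Crel (FreeAlgebra.ι R5 Cgen.u0)
def U1 : H := RingQuot.mkAlgHom R5 Crel (FreeAlgebra.ι R5 Cgen.u1)
def V0 : H := RingQuot.mkAlgHom R5 Crel (FreeAlgebra.ι R5 Cgen.v0)
def V1 : H := RingQuot.mkAlgHom R5 Crel (FreeAlgebra.ι R5 Cgen.v1)

/-- image of a base-ring element in `H` -/
def c (r : R5) : H := algebraMap R5 H r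

/-- `U₀⁻¹ = U₀ − u₀^{1/2} + u₀^{−1/2}` -/
def U0i : H := U0 - c R5.u0h + c R5.u0hi
/-- `U₁⁻¹ = U₁ − u₁^{1/2} + u₁^{−1/2}` -/
def U1i : H := U1 - c R5.u1h + c R5.u1hi
/-- `V₀⁻¹ = V₀ − v₀^{1/2} + v₀^{−1/2}` -/
def V0i : H := V0 - c R5.v0h + c R5.v0hi
/-- `V₁⁻¹ = V₁ − v₁^{1/2} + v₁^{−1/2}` -/
def V1i : H := V1 - c R5.v1h + c R5.v1hi
/-- `𝕏 = V₁⁻¹·U₁⁻¹` -/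
def XX : H := V1i * U1i
/-- `𝕏⁻¹ = U₁·V₁` -/
def XXi : H := U1 * V1
/-- `𝕐 = U₀·U₁` -/
def YY : H := U0 * U1
/-- `𝕐⁻¹ = U₁⁻¹·U₀⁻¹` -/
def YYi : H := U1i * U0i

end H

open H

/-- `φ : H → H'` is semilinear over `θ : R → R` -/
def Semilin (θ : R5 ≃+* R5) (f : H → H) : Prop :=
  ∀ r : R5, f (algebraMap R5 H r) = algebraMap R5 H (θ r)

/-- `θ₊` interchanges `u₀^{1/2}` and `v₀^{1/2}` fixing `q^{1/4}, u₁^{1/2}, v₁^{1/2}`. -/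
def ThetaPlus (θ : R5 ≃+* R5) : Prop :=
  θ R5.q4 = R5.q4 ∧ θ R5.u1h = R5.u1h ∧ θ R5.v1h = R5.v1h ∧
  θ R5.u0h = R5.v0h ∧ θ R5.v0h = R5.u0h

/-- defining conditions on `τ₊` -/
def TauPlus (θ : R5 ≃+* R5) (τ : H ≃+* H) : Prop :=
  Semilin θ τ ∧ τ U1 = U1 ∧ τ V1 = V1 ∧
  τ U0 = c R5.q4i * XX * U0i ∧ τ V0 = c R5.q4i * XX * V0i

/-! ### auxiliary development -/

namespace CC1

open AddMonoidAlgebra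

/-! #### The base-ring automorphism `θ0` -/

def e5 : (ℤ×ℤ×ℤ×ℤ×ℤ) ≃+ (ℤ×ℤ×ℤ×ℤ×ℤ) where
  toFun x := (x.1, x.2.2.2.1, x.2.2.1, x.2.1, x.2.2.2.2)
  invFun x := (x.1, x.2.2.2.1, x.2.2.1, x.2.1, x.2.2.2.2)
  left_inv _ := rfl
  right_inv _ := rfl
  map_add' _ _ := rfl

def θ0 : R5 ≃+* R5 := (AddMonoidAlgebra.domCongr ℤ ℤ e5).toRingEquiv

lemma θ0_single (g : ℤ×ℤ×ℤ×ℤ×ℤ) (a : ℤ) :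
    θ0 (AddMonoidAlgebra.single g a) = AddMonoidAlgebra.single (e5 g) a := by
  show (AddMonoidAlgebra.domCongr ℤ ℤ e5) _ = _
  rw [AddMonoidAlgebra.domCongr_single]

lemma θ0θ0 (r : R5) : θ0 (θ0 r) = r := by
  induction r using AddMonoidAlgebra.induction_linear with
  | zero => simp
  | add f g hf hg => rw [map_add, map_add, hf, hg]
  | single g a => rw [θ0_single, θ0_single]; rfl

lemma θ0_q4 : θ0 R5.q4 = R5.q4 := by rw [R5.q4, θ0_single]; rfl
lemma θ0_q4i : θ0 R5.q4i = R5.q4i := by rw [R5.q4i, θ0_single]; rfl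
lemma θ0_u0h : θ0 R5.u0h = R5.v0h := by rw [R5.u0h, θ0_single]; rfl
lemma θ0_u0hi : θ0 R5.u0hi = R5.v0hi := by rw [R5.u0hi, θ0_single]; rfl
lemma θ0_v0h : θ0 R5.v0h = R5.u0h := by rw [R5.v0h, θ0_single]; rfl
lemma θ0_v0hi : θ0 R5.v0hi = R5.u0hi := by rw [R5.v0hi, θ0_single]; rfl
lemma θ0_u1h : θ0 R5.u1h = R5.u1h := by rw [R5.u1h, θ0_single]; rfl
lemma θ0_u1hi : θ0 R5.u1hi = R5.u1hi := by rw [R5.u1hi, θ0_single]; rfl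
lemma θ0_v1h : θ0 R5.v1h = R5.v1h := by rw [R5.v1h, θ0_single]; rfl
lemma θ0_v1hi : θ0 R5.v1hi = R5.v1hi := by rw [R5.v1hi, θ0_single]; rfl

lemma theta0_plus : ThetaPlus θ0 := ⟨θ0_q4, θ0_u1h, θ0_v1h, θ0_u0h, θ0_v0h⟩

/-! #### uniqueness of `θ` -/

lemma single_mul_inv (g : ℤ×ℤ×ℤ×ℤ×ℤ) :
    (AddMonoidAlgebra.single g (1:ℤ) : R5) * AddMonoidAlgebra.single (-g) 1 = 1 := by
  rw [AddMonoidAlgebra.single_mul_single]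
  simp [AddMonoidAlgebra.one_def]

lemma inv_val (φ : R5 ≃+* R5) {g h : ℤ×ℤ×ℤ×ℤ×ℤ}
    (hg : φ (AddMonoidAlgebra.single g 1) = AddMonoidAlgebra.single h 1) :
    φ (AddMonoidAlgebra.single (-g) 1) = AddMonoidAlgebra.single (-h) 1 := by
  have h2 : (AddMonoidAlgebra.single h (1:ℤ) : R5) * φ (AddMonoidAlgebra.single (-g) 1) = 1 := by
    rw [← hg, ← map_mul, single_mul_inv, map_one]
  calc φ (AddMonoidAlgebra.single (-g) 1)
      = φ (AddMonoidAlgebra.single (-g) 1) *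
        ((AddMonoidAlgebra.single h (1:ℤ) : R5) * AddMonoidAlgebra.single (-h) 1) := by
        rw [single_mul_inv, mul_one]
    _ = ((AddMonoidAlgebra.single h (1:ℤ) : R5) * φ (AddMonoidAlgebra.single (-g) 1)) *
        AddMonoidAlgebra.single (-h) 1 := by ring
    _ = AddMonoidAlgebra.single (-h) 1 := by rw [h2, one_mul]

lemma zpow_agree (φ : R5 ≃+* R5) (g : ℤ×ℤ×ℤ×ℤ×ℤ)
    (hg : φ (AddMonoidAlgebra.single g 1) = AddMonoidAlgebra.single (e5 g) 1) :
    ∀ n : ℤ, φ (AddMonoidAlgebra.single (n • g) 1) = AddMonoidAlgebra.single (e5 (n • g)) 1 := by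
  have hg' : φ (AddMonoidAlgebra.single (-g) 1) = AddMonoidAlgebra.single (e5 (-g)) 1 := by
    rw [map_neg]; exact inv_val φ hg
  intro n
  induction n using Int.induction_on with
  | zero =>
      simp only [zero_smul, map_zero]
      rw [← AddMonoidAlgebra.one_def, map_one]
  | succ n ih =>
      have e1 : ((n:ℤ)+1) • g = (n:ℤ) • g + g := by rw [add_smul, one_smul]
      have e2 : (AddMonoidAlgebra.single ((n:ℤ)•g) (1:ℤ) : R5) * AddMonoidAlgebra.single g 1 =
          AddMonoidAlgebra.single ((n:ℤ)•g + g) 1 := by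
        rw [AddMonoidAlgebra.single_mul_single, one_mul]
      rw [e1, ← e2, map_mul, ih, hg, AddMonoidAlgebra.single_mul_single, one_mul, ← map_add]
  | pred n ih =>
      have e1 : (-(n:ℤ)-1) • g = (-(n:ℤ)) • g + -g := by rw [sub_smul, one_smul, neg_smul]; abel
      have e2 : (AddMonoidAlgebra.single ((-(n:ℤ))•g) (1:ℤ) : R5) * AddMonoidAlgebra.single (-g) 1 =
          AddMonoidAlgebra.single ((-(n:ℤ))•g + -g) 1 := by
        rw [AddMonoidAlgebra.single_mul_single, one_mul]
      rw [e1, ← e2, map_mul, ih, hg', AddMonoidAlgebra.single_mul_single, one_mul, ← map_add]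

lemma theta_unique (φ : R5 ≃+* R5) (hφ : ThetaPlus φ) : φ = θ0 := by
  obtain ⟨h1, h2, h3, h4, h5⟩ := hφ
  have c1 := zpow_agree φ (1,0,0,0,0) h1
  have c2 := zpow_agree φ (0,1,0,0,0) h4
  have c3 := zpow_agree φ (0,0,1,0,0) h2
  have c4 := zpow_agree φ (0,0,0,1,0) h5
  have c5 := zpow_agree φ (0,0,0,0,1) h3
  have key : ∀ g : ℤ×ℤ×ℤ×ℤ×ℤ,
      φ (AddMonoidAlgebra.single g 1) = AddMonoidAlgebra.single (e5 g) 1 := by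
    rintro ⟨a, b, cc, d, e⟩
    have dec : (AddMonoidAlgebra.single ((a,b,cc,d,e) : ℤ×ℤ×ℤ×ℤ×ℤ) (1:ℤ) : R5) =
        AddMonoidAlgebra.single (a • ((1:ℤ),(0:ℤ),(0:ℤ),(0:ℤ),(0:ℤ))) 1 *
        AddMonoidAlgebra.single (b • ((0:ℤ),(1:ℤ),(0:ℤ),(0:ℤ),(0:ℤ))) 1 *
        AddMonoidAlgebra.single (cc • ((0:ℤ),(0:ℤ),(1:ℤ),(0:ℤ),(0:ℤ))) 1 *
        AddMonoidAlgebra.single (d • ((0:ℤ),(0:ℤ),(0:ℤ),(1:ℤ),(0:ℤ))) 1 *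
        AddMonoidAlgebra.single (e • ((0:ℤ),(0:ℤ),(0:ℤ),(0:ℤ),(1:ℤ))) 1 := by
      simp only [AddMonoidAlgebra.single_mul_single, one_mul]
      congr 1 <;> simp [Prod.ext_iff, smul_eq_mul]
    rw [dec, map_mul, map_mul, map_mul, map_mul, c1, c2, c3, c4, c5]
    simp only [AddMonoidAlgebra.single_mul_single, one_mul, ← map_add]
    congr 2
    simp [Prod.ext_iff, smul_eq_mul]
  refine RingEquiv.ext fun r => ?_
  induction r using AddMonoidAlgebra.induction_linear with
  | zero => simp
  | add f g hf hg => rw [map_add, map_add, hf, hg]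
  | single g a =>
      have e : (AddMonoidAlgebra.single g a : R5) = a • AddMonoidAlgebra.single g 1 := by
        rw [AddMonoidAlgebra.smul_single, smul_eq_mul, mul_one]
      rw [e, map_zsmul, map_zsmul, key, θ0_single]

/-! #### basic facts in `H` -/

lemma hq : R5.q4 * R5.q4i = 1 := single_mul_inv (1,0,0,0,0)
lemma hu0 : R5.u0h * R5.u0hi = 1 := single_mul_inv (0,1,0,0,0)
lemma hu1 : R5.u1h * R5.u1hi = 1 := single_mul_inv (0,0,1,0,0)
lemma hv0 : R5.v0h * R5.v0hi = 1 := single_mul_inv (0,0,0,1,0)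
lemma hv1 : R5.v1h * R5.v1hi = 1 := single_mul_inv (0,0,0,0,1)

lemma c_comm (r : R5) (x : H) : c r * x = x * c r := Algebra.commutes r x

lemma c_left (r : R5) (x y : H) : x * (c r * y) = c r * (x * y) := by
  rw [← mul_assoc, ← c_comm, mul_assoc]

lemma map_sub_H {F : Type*} [FunLike F H H] [RingHomClass F H H] (f : F) (x y : H) :
    f (x - y) = f x - f y := map_sub f x y

lemma relU0 : (U0 - c R5.u0h) * (U0 + c R5.u0hi) = 0 := by
  have h := RingQuot.mkAlgHom_rel R5 Crel.heckeU0
  simpa [map_mul, map_sub, map_add, U0, c] using h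

lemma relU1 : (U1 - c R5.u1h) * (U1 + c R5.u1hi) = 0 := by
  have h := RingQuot.mkAlgHom_rel R5 Crel.heckeU1
  simpa [map_mul, map_sub, map_add, U1, c] using h

lemma relV0 : (V0 - c R5.v0h) * (V0 + c R5.v0hi) = 0 := by
  have h := RingQuot.mkAlgHom_rel R5 Crel.heckeV0
  simpa [map_mul, map_sub, map_add, V0, c] using h

lemma relV1 : (V1 - c R5.v1h) * (V1 + c R5.v1hi) = 0 := by
  have h := RingQuot.mkAlgHom_rel R5 Crel.heckeV1
  simpa [map_mul, map_sub, map_add, V1, c] using h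

lemma relUnit : c R5.q4 * V1 * V0 * U0 * U1 = 1 := by
  have h := RingQuot.mkAlgHom_rel R5 Crel.unit
  simpa [map_mul, U0, U1, V0, V1, c] using h

lemma quad_inv {A : Type*} [Ring A] [Algebra R5 A] {x : A} {a b : R5}
    (h : (x - algebraMap R5 A a) * (x + algebraMap R5 A b) = 0) (hab : a * b = 1) :
    x * (x - algebraMap R5 A a + algebraMap R5 A b) = 1 ∧
    (x - algebraMap R5 A a + algebraMap R5 A b) * x = 1 := by
  set ca := algebraMap R5 A a with hca_def
  set cb := algebraMap R5 A b with hcb_def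
  have hca : ca * x = x * ca := Algebra.commutes a x
  have hcb : cb * x = x * cb := Algebra.commutes b x
  have hab' : ca * cb = 1 := by
    rw [hca_def, hcb_def, ← map_mul, hab, map_one]
  have e : (x - ca) * (x + cb) = x*x + x * cb - ca * x - ca * cb := by
    rw [sub_mul, mul_add, mul_add, sub_add_eq_sub_sub]
  rw [e, hca, hab'] at h
  have h2 : x*x + x * cb - x * ca = 1 := by
    have h3 := congrArg (· + 1) h
    simpa using h3
  constructor
  · calc x * (x - ca + cb) = x*x + x * cb - x * ca := by rw [mul_add, mul_sub]; abel
      _ = 1 := h2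
  · calc (x - ca + cb) * x = x*x + cb * x - ca * x := by rw [add_mul, sub_mul]; abel
      _ = x*x + x * cb - x * ca := by rw [hca, hcb]
      _ = 1 := h2

lemma mU0 : U0 * U0i = 1 := by
  show U0 * (U0 - c R5.u0h + c R5.u0hi) = 1
  exact (quad_inv (A := H) (x := U0) (a := R5.u0h) (b := R5.u0hi) relU0 hu0).1
lemma mU0' : U0i * U0 = 1 := by
  show (U0 - c R5.u0h + c R5.u0hi) * U0 = 1
  exact (quad_inv (A := H) (x := U0) (a := R5.u0h) (b := R5.u0hi) relU0 hu0).2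
lemma mU1 : U1 * U1i = 1 := by
  show U1 * (U1 - c R5.u1h + c R5.u1hi) = 1
  exact (quad_inv (A := H) (x := U1) (a := R5.u1h) (b := R5.u1hi) relU1 hu1).1
lemma mU1' : U1i * U1 = 1 := by
  show (U1 - c R5.u1h + c R5.u1hi) * U1 = 1
  exact (quad_inv (A := H) (x := U1) (a := R5.u1h) (b := R5.u1hi) relU1 hu1).2
lemma mV0 : V0 * V0i = 1 := by
  show V0 * (V0 - c R5.v0h + c R5.v0hi) = 1
  exact (quad_inv (A := H) (x := V0) (a := R5.v0h) (b := R5.v0hi) relV0 hv0).1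
lemma mV0' : V0i * V0 = 1 := by
  show (V0 - c R5.v0h + c R5.v0hi) * V0 = 1
  exact (quad_inv (A := H) (x := V0) (a := R5.v0h) (b := R5.v0hi) relV0 hv0).2
lemma mV1 : V1 * V1i = 1 := by
  show V1 * (V1 - c R5.v1h + c R5.v1hi) = 1
  exact (quad_inv (A := H) (x := V1) (a := R5.v1h) (b := R5.v1hi) relV1 hv1).1
lemma mV1' : V1i * V1 = 1 := by
  show (V1 - c R5.v1h + c R5.v1hi) * V1 = 1
  exact (quad_inv (A := H) (x := V1) (a := R5.v1h) (b := R5.v1hi) relV1 hv1).2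

lemma cq : c R5.q4 * c R5.q4i = 1 := by
  rw [show c R5.q4 * c R5.q4i = c (R5.q4 * R5.q4i) from (map_mul (algebraMap R5 H) _ _).symm, hq]
  exact map_one (algebraMap R5 H)
lemma cq' : c R5.q4i * c R5.q4 = 1 := by
  rw [show c R5.q4i * c R5.q4 = c (R5.q4i * R5.q4) from (map_mul (algebraMap R5 H) _ _).symm,
    mul_comm, hq]
  exact map_one (algebraMap R5 H)

lemma rU0 (x : H) : U0 * (U0i * x) = x := by rw [← mul_assoc, mU0, one_mul]
lemma rU0' (x : H) : U0i * (U0 * x) = x := by rw [← mul_assoc, mU0', one_mul]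
lemma rU1 (x : H) : U1 * (U1i * x) = x := by rw [← mul_assoc, mU1, one_mul]
lemma rU1' (x : H) : U1i * (U1 * x) = x := by rw [← mul_assoc, mU1', one_mul]
lemma rV0 (x : H) : V0 * (V0i * x) = x := by rw [← mul_assoc, mV0, one_mul]
lemma rV0' (x : H) : V0i * (V0 * x) = x := by rw [← mul_assoc, mV0', one_mul]
lemma rV1 (x : H) : V1 * (V1i * x) = x := by rw [← mul_assoc, mV1, one_mul]
lemma rV1' (x : H) : V1i * (V1 * x) = x := by rw [← mul_assoc, mV1', one_mul]
lemma rcq (x : H) : c R5.q4 * (c R5.q4i * x) = x := by rw [← mul_assoc, cq, one_mul]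
lemma rcq' (x : H) : c R5.q4i * (c R5.q4 * x) = x := by rw [← mul_assoc, cq', one_mul]

def uU0 : Hˣ := ⟨U0, U0i, mU0, mU0'⟩
def uU1 : Hˣ := ⟨U1, U1i, mU1, mU1'⟩
def uV0 : Hˣ := ⟨V0, V0i, mV0, mV0'⟩
def uV1 : Hˣ := ⟨V1, V1i, mV1, mV1'⟩
def uq : Hˣ := ⟨c R5.q4, c R5.q4i, cq, cq'⟩

@[simp] lemma uU0_val : ((uU0 : Hˣ) : H) = U0 := rfl
@[simp] lemma uU0_inv : ((uU0⁻¹ : Hˣ) : H) = U0i := rfl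
@[simp] lemma uU1_val : ((uU1 : Hˣ) : H) = U1 := rfl
@[simp] lemma uU1_inv : ((uU1⁻¹ : Hˣ) : H) = U1i := rfl
@[simp] lemma uV0_val : ((uV0 : Hˣ) : H) = V0 := rfl
@[simp] lemma uV0_inv : ((uV0⁻¹ : Hˣ) : H) = V0i := rfl
@[simp] lemma uV1_val : ((uV1 : Hˣ) : H) = V1 := rfl
@[simp] lemma uV1_inv : ((uV1⁻¹ : Hˣ) : H) = V1i := rfl
@[simp] lemma uq_val : ((uq : Hˣ) : H) = c R5.q4 := rfl
@[simp] lemma uq_inv : ((uq⁻¹ : Hˣ) : H) = c R5.q4i := rfl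

lemma urel : uq * uV1 * uV0 * uU0 * uU1 = 1 := by
  apply Units.ext
  simpa [Units.val_mul] using relUnit

lemma hrel : uV1 * uV0 * uU0 * uU1 = uq⁻¹ := by
  have h' : uq * (uV1 * uV0 * uU0 * uU1) = 1 := by rw [← urel]; group
  exact (inv_eq_of_mul_eq_one_right h').symm

lemma w1 : uV0 = uV1⁻¹ * uq⁻¹ * uU1⁻¹ * uU0⁻¹ := by rw [← hrel]; group
lemma w2 : uU0 = uV0⁻¹ * uV1⁻¹ * uq⁻¹ * uU1⁻¹ := by rw [← hrel]; group

lemma ew1 : V0 = V1i * c R5.q4i * U1i * U0i := by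
  have h := congrArg Units.val w1
  simpa [Units.val_mul] using h

lemma ew2 : U0 = V0i * V1i * c R5.q4i * U1i := by
  have h := congrArg Units.val w2
  simpa [Units.val_mul] using h

lemma idV0 : c R5.q4i * XX * U0i = V0 := by
  rw [ew1, XX]
  simp [mul_assoc, c_left]

lemma idU0 : c R5.q4i * V0i * XX = U0 := by
  rw [ew2, XX]
  simp [mul_assoc, c_left]

lemma idW : c R5.q4i * XX * V0i = V0 * U0 * V0i := by
  conv_rhs => rw [ew2]
  rw [XX]
  simp [mul_assoc, c_left, rV0]

lemma idZ : c R5.q4i * U0i * XX = U0i * V0 * U0 := by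
  conv_rhs => rw [ew1]
  rw [XX]
  simp [mul_assoc, c_left, mU0', rU0']

lemma conj_quad {A : Type*} [Ring A] [Algebra R5 A] (y x yi : A)
    (h1 : y * yi = 1) (h2 : yi * y = 1) (a b : R5)
    (h : (x - algebraMap R5 A a) * (x + algebraMap R5 A b) = 0) :
    (y * x * yi - algebraMap R5 A a) * (y * x * yi + algebraMap R5 A b) = 0 := by
  set ca := algebraMap R5 A a with hca_def
  set cb := algebraMap R5 A b with hcb_def
  have hc : ∀ r : R5, y * algebraMap R5 A r * yi = algebraMap R5 A r := by
    intro r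
    rw [show y * algebraMap R5 A r = algebraMap R5 A r * y from (Algebra.commutes r y).symm,
      mul_assoc, h1, mul_one]
  have ea : y * x * yi - ca = y * (x - ca) * yi := by
    rw [mul_sub, sub_mul]
    congr 1
    exact (hc a).symm
  have eb : y * x * yi + cb = y * (x + cb) * yi := by
    rw [mul_add, add_mul]
    congr 1
    exact (hc b).symm
  rw [ea, eb]
  calc y * (x - ca) * yi * (y * (x + cb) * yi)
      = y * ((x - ca) * (yi * y * ((x + cb) * yi))) := by simp [mul_assoc]
    _ = y * ((x - ca) * (x + cb) * yi) := by rw [h2, one_mul, mul_assoc]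
    _ = 0 := by rw [h, zero_mul, mul_zero]

/-! #### the maps `F`, `G` -/

/-- `H` with the `θ0`-twisted `R5`-algebra structure -/
def H' : Type := H
instance : Ring H' := inferInstanceAs (Ring H)
instance twAlg : Algebra R5 H' := RingHom.toAlgebra'
  (show R5 →+* H' from (algebraMap R5 H).comp (θ0 : R5 →+* R5))
  (fun r x => Algebra.commutes (θ0 r) (show H from x))

def Fgen : Cgen → H
  | .u0 => V0
  | .u1 => U1
  | .v0 => c R5.q4i * XX * V0i
  | .v1 => V1

def Ggen : Cgen → H
  | .u0 => c R5.q4i * U0i * XX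
  | .u1 => U1
  | .v0 => U0
  | .v1 => V1

def FAlg : FreeAlgebra R5 Cgen →ₐ[R5] H' := FreeAlgebra.lift R5 (Fgen : Cgen → H')
def GAlg : FreeAlgebra R5 Cgen →ₐ[R5] H' := FreeAlgebra.lift R5 (Ggen : Cgen → H')

def Fhom : FreeAlgebra R5 Cgen →+* H := FAlg.toRingHom
def Ghom : FreeAlgebra R5 Cgen →+* H := GAlg.toRingHom

lemma Fhom_ι (x : Cgen) : Fhom (FreeAlgebra.ι R5 x) = Fgen x :=
  FreeAlgebra.lift_ι_apply (R := R5) (X := Cgen) (A := H') (f := (Fgen : Cgen → H')) x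

lemma Ghom_ι (x : Cgen) : Ghom (FreeAlgebra.ι R5 x) = Ggen x :=
  FreeAlgebra.lift_ι_apply (R := R5) (X := Cgen) (A := H') (f := (Ggen : Cgen → H')) x

lemma Fhom_alg (r : R5) : Fhom (algebraMap R5 _ r) = c (θ0 r) :=
  FAlg.commutes r

lemma Ghom_alg (r : R5) : Ghom (algebraMap R5 _ r) = c (θ0 r) :=
  GAlg.commutes r

lemma Frel : ∀ ⦃x y⦄, Crel x y → Fhom x = Fhom y := by
  intro x y h
  cases h with
  | heckeU0 =>
      simp only [map_mul, map_sub, map_add, map_zero, Fhom_ι, Fhom_alg, θ0_u0h, θ0_u0hi, Fgen]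
      exact relV0
  | heckeU1 =>
      simp only [map_mul, map_sub, map_add, map_zero, Fhom_ι, Fhom_alg, θ0_u1h, θ0_u1hi, Fgen]
      exact relU1
  | heckeV0 =>
      simp only [map_mul, map_sub, map_add, map_zero, Fhom_ι, Fhom_alg, θ0_v0h, θ0_v0hi, Fgen]
      rw [idW]
      exact conj_quad V0 U0 V0i mV0 mV0' _ _ relU0
  | heckeV1 =>
      simp only [map_mul, map_sub, map_add, map_zero, Fhom_ι, Fhom_alg, θ0_v1h, θ0_v1hi, Fgen]
      exact relV1
  | unit =>
      simp only [map_mul, map_one, Fhom_ι, Fhom_alg, θ0_q4, Fgen]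
      rw [idW]
      calc c R5.q4 * V1 * (V0 * U0 * V0i) * V0 * U1
          = c R5.q4 * (V1 * (V0 * (U0 * (V0i * (V0 * U1))))) := by simp [mul_assoc]
        _ = c R5.q4 * (V1 * (V0 * (U0 * U1))) := by rw [rV0']
        _ = 1 := by rw [← relUnit]; simp [mul_assoc]

lemma Grel : ∀ ⦃x y⦄, Crel x y → Ghom x = Ghom y := by
  intro x y h
  cases h with
  | heckeU0 =>
      simp only [map_mul, map_sub, map_add, map_zero, Ghom_ι, Ghom_alg, θ0_u0h, θ0_u0hi, Ggen]
      rw [idZ]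
      exact conj_quad U0i V0 U0 mU0' mU0 _ _ relV0
  | heckeU1 =>
      simp only [map_mul, map_sub, map_add, map_zero, Ghom_ι, Ghom_alg, θ0_u1h, θ0_u1hi, Ggen]
      exact relU1
  | heckeV0 =>
      simp only [map_mul, map_sub, map_add, map_zero, Ghom_ι, Ghom_alg, θ0_v0h, θ0_v0hi, Ggen]
      exact relU0
  | heckeV1 =>
      simp only [map_mul, map_sub, map_add, map_zero, Ghom_ι, Ghom_alg, θ0_v1h, θ0_v1hi, Ggen]
      exact relV1
  | unit =>
      simp only [map_mul, map_one, Ghom_ι, Ghom_alg, θ0_q4, Ggen]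
      rw [idZ]
      calc c R5.q4 * V1 * U0 * (U0i * V0 * U0) * U1
          = c R5.q4 * (V1 * (U0 * (U0i * (V0 * (U0 * U1))))) := by simp [mul_assoc]
        _ = c R5.q4 * (V1 * (V0 * (U0 * U1))) := by rw [rU0]
        _ = 1 := by rw [← relUnit]; simp [mul_assoc]

def τf : H →+* H := RingQuot.lift ⟨Fhom, Frel⟩
def τg : H →+* H := RingQuot.lift ⟨Ghom, Grel⟩

lemma mk_eq (x : FreeAlgebra R5 Cgen) :
    RingQuot.mkAlgHom R5 Crel x = RingQuot.mkRingHom Crel x := by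
  rw [← RingQuot.mkAlgHom_coe R5]; rfl

lemma mk_alg (r : R5) : RingQuot.mkRingHom Crel (algebraMap R5 _ r) = c r := by
  rw [← mk_eq]
  exact (RingQuot.mkAlgHom R5 Crel).commutes r

lemma mk_u0 : RingQuot.mkRingHom Crel (FreeAlgebra.ι R5 Cgen.u0) = U0 := (mk_eq _).symm
lemma mk_u1 : RingQuot.mkRingHom Crel (FreeAlgebra.ι R5 Cgen.u1) = U1 := (mk_eq _).symm
lemma mk_v0 : RingQuot.mkRingHom Crel (FreeAlgebra.ι R5 Cgen.v0) = V0 := (mk_eq _).symm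
lemma mk_v1 : RingQuot.mkRingHom Crel (FreeAlgebra.ι R5 Cgen.v1) = V1 := (mk_eq _).symm

lemma τf_mk (x : FreeAlgebra R5 Cgen) : τf (RingQuot.mkRingHom Crel x) = Fhom x :=
  RingQuot.lift_mkRingHom_apply Fhom Frel x

lemma τg_mk (x : FreeAlgebra R5 Cgen) : τg (RingQuot.mkRingHom Crel x) = Ghom x :=
  RingQuot.lift_mkRingHom_apply Ghom Grel x

lemma τf_c (r : R5) : τf (c r) = c (θ0 r) := by
  have h : τf (RingQuot.mkRingHom Crel (algebraMap R5 _ r)) = c (θ0 r) := by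
    rw [τf_mk, Fhom_alg]
  rwa [mk_alg] at h

lemma τg_c (r : R5) : τg (c r) = c (θ0 r) := by
  have h : τg (RingQuot.mkRingHom Crel (algebraMap R5 _ r)) = c (θ0 r) := by
    rw [τg_mk, Ghom_alg]
  rwa [mk_alg] at h

lemma τf_U0 : τf U0 = V0 := by
  have h : τf (RingQuot.mkRingHom Crel (FreeAlgebra.ι R5 Cgen.u0)) = Fgen Cgen.u0 := by
    rw [τf_mk, Fhom_ι]
  rw [mk_u0] at h
  exact h
lemma τf_U1 : τf U1 = U1 := by
  have h : τf (RingQuot.mkRingHom Crel (FreeAlgebra.ι R5 Cgen.u1)) = Fgen Cgen.u1 := by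
    rw [τf_mk, Fhom_ι]
  rw [mk_u1] at h
  exact h
lemma τf_V0 : τf V0 = c R5.q4i * XX * V0i := by
  have h : τf (RingQuot.mkRingHom Crel (FreeAlgebra.ι R5 Cgen.v0)) = Fgen Cgen.v0 := by
    rw [τf_mk, Fhom_ι]
  rw [mk_v0] at h
  exact h
lemma τf_V1 : τf V1 = V1 := by
  have h : τf (RingQuot.mkRingHom Crel (FreeAlgebra.ι R5 Cgen.v1)) = Fgen Cgen.v1 := by
    rw [τf_mk, Fhom_ι]
  rw [mk_v1] at h
  exact h
lemma τg_U0 : τg U0 = c R5.q4i * U0i * XX := by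
  have h : τg (RingQuot.mkRingHom Crel (FreeAlgebra.ι R5 Cgen.u0)) = Ggen Cgen.u0 := by
    rw [τg_mk, Ghom_ι]
  rw [mk_u0] at h
  exact h
lemma τg_U1 : τg U1 = U1 := by
  have h : τg (RingQuot.mkRingHom Crel (FreeAlgebra.ι R5 Cgen.u1)) = Ggen Cgen.u1 := by
    rw [τg_mk, Ghom_ι]
  rw [mk_u1] at h
  exact h
lemma τg_V0 : τg V0 = U0 := by
  have h : τg (RingQuot.mkRingHom Crel (FreeAlgebra.ι R5 Cgen.v0)) = Ggen Cgen.v0 := by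
    rw [τg_mk, Ghom_ι]
  rw [mk_v0] at h
  exact h
lemma τg_V1 : τg V1 = V1 := by
  have h : τg (RingQuot.mkRingHom Crel (FreeAlgebra.ι R5 Cgen.v1)) = Ggen Cgen.v1 := by
    rw [τg_mk, Ghom_ι]
  rw [mk_v1] at h
  exact h

lemma τf_U0i : τf U0i = V0i := by
  simp only [U0i, V0i, map_add, map_sub_H, τf_U0, τf_c, θ0_u0h, θ0_u0hi]
lemma τf_U1i : τf U1i = U1i := by
  simp only [U1i, map_add, map_sub_H, τf_U1, τf_c, θ0_u1h, θ0_u1hi]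
lemma τf_V1i : τf V1i = V1i := by
  simp only [V1i, map_add, map_sub_H, τf_V1, τf_c, θ0_v1h, θ0_v1hi]
lemma τg_V0i : τg V0i = U0i := by
  simp only [V0i, U0i, map_add, map_sub_H, τg_V0, τg_c, θ0_v0h, θ0_v0hi]
lemma τg_U1i : τg U1i = U1i := by
  simp only [U1i, map_add, map_sub_H, τg_U1, τg_c, θ0_u1h, θ0_u1hi]
lemma τg_V1i : τg V1i = V1i := by
  simp only [V1i, map_add, map_sub_H, τg_V1, τg_c, θ0_v1h, θ0_v1hi]

lemma τf_XX : τf XX = XX := by rw [XX, map_mul, τf_V1i, τf_U1i]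
lemma τg_XX : τg XX = XX := by rw [XX, map_mul, τg_V1i, τg_U1i]

lemma gf_id : τg.comp τf = RingHom.id H := by
  apply RingQuot.ringQuot_ext
  ext x : 2
  show τg (τf (RingQuot.mkRingHom Crel x)) = RingQuot.mkRingHom Crel x
  induction x using FreeAlgebra.induction with
  | grade0 r => rw [mk_alg, τf_c, τg_c, θ0θ0]
  | grade1 i =>
      cases i with
      | u0 => rw [mk_u0]
              rw [τf_U0, τg_V0]
      | u1 => rw [mk_u1]
              rw [τf_U1, τg_U1]
      | v0 => rw [mk_v0]
              rw [τf_V0, map_mul, map_mul, τg_c, θ0_q4i, τg_XX, τg_V0i, idV0]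
      | v1 => rw [mk_v1]
              rw [τf_V1, τg_V1]
  | mul a b ha hb => rw [map_mul, map_mul, map_mul, ha, hb]
  | add a b ha hb => rw [map_add, map_add, map_add, ha, hb]

lemma fg_id : τf.comp τg = RingHom.id H := by
  apply RingQuot.ringQuot_ext
  ext x : 2
  show τf (τg (RingQuot.mkRingHom Crel x)) = RingQuot.mkRingHom Crel x
  induction x using FreeAlgebra.induction with
  | grade0 r => rw [mk_alg, τg_c, τf_c, θ0θ0]
  | grade1 i =>
      cases i with
      | u0 => rw [mk_u0]
              rw [τg_U0, map_mul, map_mul, τf_c, θ0_q4i, τf_XX, τf_U0i, idU0]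
      | u1 => rw [mk_u1]
              rw [τg_U1, τf_U1]
      | v0 => rw [mk_v0]
              rw [τg_V0, τf_U0]
      | v1 => rw [mk_v1]
              rw [τg_V1, τf_V1]
  | mul a b ha hb => rw [map_mul, map_mul, map_mul, ha, hb]
  | add a b ha hb => rw [map_add, map_add, map_add, ha, hb]

def τ : H ≃+* H := RingEquiv.ofRingHom τf τg fg_id gf_id

lemma τ_apply (x : H) : τ x = τf x := rfl

lemma tau0_plus : TauPlus θ0 τ := by
  refine ⟨fun r => ?_, ?_, ?_, ?_, ?_⟩
  · rw [τ_apply]; exact τf_c r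
  · rw [τ_apply]; exact τf_U1
  · rw [τ_apply]; exact τf_V1
  · rw [τ_apply, τf_U0, idV0]
  · rw [τ_apply]; exact τf_V0

lemma tau_unique (τ' : H ≃+* H) (h : TauPlus θ0 τ') : τ' = τ := by
  obtain ⟨hs, h1, h2, h3, h4⟩ := h
  obtain ⟨hs', h1', h2', h3', h4'⟩ := tau0_plus
  ext x
  obtain ⟨y, rfl⟩ := RingQuot.mkRingHom_surjective Crel x
  induction y using FreeAlgebra.induction with
  | grade0 r =>
      have hsc : ∀ r, τ' (c r) = c (θ0 r) := fun r => hs r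
      have hsc' : ∀ r, CC1.τ (c r) = c (θ0 r) := fun r => hs' r
      rw [mk_alg, hsc, hsc']
  | grade1 i =>
      cases i with
      | u0 => rw [mk_u0, h3, h3']
      | u1 => rw [mk_u1, h1, h1']
      | v0 => rw [mk_v0, h4, h4']
      | v1 => rw [mk_v1, h2, h2']
  | mul a b ha hb => rw [map_mul, map_mul, map_mul, ha, hb]
  | add a b ha hb => rw [map_add, map_add, map_add, ha, hb]

end CC1

open CC1

/-- there is a unique ring automorphism `τ₊` of `H`, semilinear over `θ₊`,
with `τ₊(U₁) = U₁`, `τ₊(V₁) = V₁`, `τ₊(U₀) = q^{−1/4}·𝕏·U₀⁻¹ (= V₀)`,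
`τ₊(V₀) = q^{−1/4}·𝕏·V₀⁻¹`; it satisfies `τ₊(𝕏) = 𝕏` and
`τ₊(𝕐) = V₀·U₁ = q^{−1/4}·V₁⁻¹·𝕐⁻¹·U₁`. -/
theorem statement7 :
    (∃! θ : R5 ≃+* R5, ThetaPlus θ) ∧
    ∀ θ : R5 ≃+* R5, ThetaPlus θ →
      (∃! τ : H ≃+* H, TauPlus θ τ) ∧
      (c R5.q4i * XX * U0i = V0) ∧
      ∀ τ : H ≃+* H, TauPlus θ τ →
        τ XX = XX ∧ τ YY = V0 * U1 ∧ V0 * U1 = c R5.q4i * V1i * YYi * U1 := by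
  constructor
  · exact ⟨θ0, theta0_plus, theta_unique⟩
  · intro θ hθ
    have hθ0 : θ = θ0 := theta_unique θ hθ
    subst hθ0
    refine ⟨⟨τ, tau0_plus, tau_unique⟩, idV0, ?_⟩
    intro τ' hτ'
    obtain ⟨hs, h1, h2, h3, h4⟩ := hτ'
    have hsc : ∀ r, τ' (c r) = c (θ0 r) := fun r => hs r
    have hXX : τ' XX = XX := by
      have hV1i : τ' V1i = V1i := by
        simp only [V1i, map_add, map_sub_H, h2, hsc, θ0_v1h, θ0_v1hi]
      have hU1i : τ' U1i = U1i := by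
        simp only [U1i, map_add, map_sub_H, h1, hsc, θ0_u1h, θ0_u1hi]
      rw [XX, map_mul, hV1i, hU1i]
    refine ⟨hXX, ?_, ?_⟩
    · rw [YY, map_mul, h3, h1, idV0]
    · rw [← idV0, YYi, XX]
      simp [mul_assoc]
end
end

section
/- Let θ₋ be the ring automorphism of R that interchanges v₀^{1/2} and v₁^{1/2} and fixes q^{1/4}, u₀^{1/2}, u₁^{1/2}. There exists a unique ring automorphism τ₋ of H, semilinear over θ₋, with τ₋(U₀) = U₀, τ₋(U₁) = U₁, τ₋(V₁) = q^{−1/4}·V₁⁻¹·𝕐⁻¹ (= V₀) and τ₋(V₀) = V₀⁻¹·V₁·V₀. It satisfies τ₋(𝕐) = 𝕐 and τ₋(𝕏) = V₀⁻¹·U₁⁻¹ = q^{1/4}·U₀·𝕏⁻¹·U₁⁻¹. -/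
noncomputable section

open H

/-- `θ₋` interchanges `v₀^{1/2}` and `v₁^{1/2}` fixing `q^{1/4}, u₀^{1/2}, u₁^{1/2}`. -/
def ThetaMinus (θ : R5 ≃+* R5) : Prop :=
  θ R5.q4 = R5.q4 ∧ θ R5.u0h = R5.u0h ∧ θ R5.u1h = R5.u1h ∧
  θ R5.v0h = R5.v1h ∧ θ R5.v1h = R5.v0h

/-- defining conditions on `τ₋` -/
def TauMinus (θ : R5 ≃+* R5) (τ : H ≃+* H) : Prop :=
  Semilin θ τ ∧ τ U0 = U0 ∧ τ U1 = U1 ∧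
  τ V1 = c R5.q4i * V1i * YYi ∧ τ V0 = V0i * V1 * V0

namespace R5aux

/-- `L s = single s 1` -/
def L (s : ℤ × ℤ × ℤ × ℤ × ℤ) : R5 := AddMonoidAlgebra.single s 1

lemma L_mul (s t : ℤ × ℤ × ℤ × ℤ × ℤ) : L s * L t = L (s + t) := by
  simp [L, AddMonoidAlgebra.single_mul_single]

lemma L_zero : L 0 = 1 := (AddMonoidAlgebra.one_def).symm

/-- the unit with value `L s` -/
def U (s : ℤ × ℤ × ℤ × ℤ × ℤ) : R5ˣ :=
  ⟨L s, L (-s), by rw [L_mul]; simp [L_zero], by rw [L_mul]; simp [L_zero]⟩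

lemma U_zpow (s : ℤ × ℤ × ℤ × ℤ × ℤ) (n : ℤ) : ((U s ^ n : R5ˣ) : R5) = L (n • s) := by
  induction n using Int.induction_on with
  | zero => simp [L_zero]
  | succ k ih => rw [zpow_add_one, Units.val_mul, ih]; show _ * L s = _
                 rw [L_mul]; congr 1; rw [add_smul, one_smul]
  | pred k ih => rw [zpow_sub_one, Units.val_mul, ih]; show _ * L (-s) = _
                 rw [L_mul]; congr 1; rw [sub_smul, one_smul]; abel

lemma L_decomp (a : ℤ × ℤ × ℤ × ℤ × ℤ) :
    L a = (U (1,0,0,0,0) ^ a.1 * U (0,1,0,0,0) ^ a.2.1 * U (0,0,1,0,0) ^ a.2.2.1 *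
      U (0,0,0,1,0) ^ a.2.2.2.1 * U (0,0,0,0,1) ^ a.2.2.2.2 : R5ˣ) := by
  obtain ⟨a1, a2, a3, a4, a5⟩ := a
  simp only [Units.val_mul, U_zpow, L_mul]
  congr 1
  simp [Prod.ext_iff]

lemma homExt (f g : R5 →+* R5) (h1 : f R5.q4 = g R5.q4) (h2 : f R5.u0h = g R5.u0h)
    (h3 : f R5.u1h = g R5.u1h) (h4 : f R5.v0h = g R5.v0h) (h5 : f R5.v1h = g R5.v1h) : f = g := by
  have key : ∀ a, f (L a) = g (L a) := by
    have e1 : Units.map (f : R5 →* R5) (U (1,0,0,0,0)) = Units.map (g : R5 →* R5) (U (1,0,0,0,0)) :=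
      Units.ext h1
    have e2 : Units.map (f : R5 →* R5) (U (0,1,0,0,0)) = Units.map (g : R5 →* R5) (U (0,1,0,0,0)) :=
      Units.ext h2
    have e3 : Units.map (f : R5 →* R5) (U (0,0,1,0,0)) = Units.map (g : R5 →* R5) (U (0,0,1,0,0)) :=
      Units.ext h3
    have e4 : Units.map (f : R5 →* R5) (U (0,0,0,1,0)) = Units.map (g : R5 →* R5) (U (0,0,0,1,0)) :=
      Units.ext h4
    have e5 : Units.map (f : R5 →* R5) (U (0,0,0,0,1)) = Units.map (g : R5 →* R5) (U (0,0,0,0,1)) :=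
      Units.ext h5
    intro a
    have hf : ∀ (h : R5 →+* R5) (u : R5ˣ), h ((u : R5ˣ) : R5) = ((Units.map (h : R5 →* R5) u : R5ˣ) : R5) :=
      fun h u => rfl
    rw [L_decomp a, hf f, hf g]
    simp only [map_mul, map_zpow, e1, e2, e3, e4, e5]
  have key2 : ∀ x : R5, f x = g x := by
    intro x
    induction x using AddMonoidAlgebra.induction_on with
    | of a => simpa [AddMonoidAlgebra.of_apply, L] using key a
    | add p q hp hq => rw [map_add, map_add, hp, hq]
    | smul r p hp =>
        rw [Algebra.smul_def, map_mul, map_mul, hp]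
        congr 1
        have : algebraMap ℤ R5 r = (r : R5) := by simp
        rw [this, map_intCast, map_intCast]
  exact RingHom.ext key2

open R5

lemma q4_pair : R5.q4 * R5.q4i = 1 := by
  show L _ * L _ = 1; rw [L_mul, show ((1,0,0,0,0):ℤ×ℤ×ℤ×ℤ×ℤ) + (-1,0,0,0,0) = 0 by simp [Prod.ext_iff], L_zero]
lemma u0h_pair : R5.u0h * R5.u0hi = 1 := by
  show L _ * L _ = 1; rw [L_mul, show ((0,1,0,0,0):ℤ×ℤ×ℤ×ℤ×ℤ) + (0,-1,0,0,0) = 0 by simp [Prod.ext_iff], L_zero]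
lemma u1h_pair : R5.u1h * R5.u1hi = 1 := by
  show L _ * L _ = 1; rw [L_mul, show ((0,0,1,0,0):ℤ×ℤ×ℤ×ℤ×ℤ) + (0,0,-1,0,0) = 0 by simp [Prod.ext_iff], L_zero]
lemma v0h_pair : R5.v0h * R5.v0hi = 1 := by
  show L _ * L _ = 1; rw [L_mul, show ((0,0,0,1,0):ℤ×ℤ×ℤ×ℤ×ℤ) + (0,0,0,-1,0) = 0 by simp [Prod.ext_iff], L_zero]
lemma v1h_pair : R5.v1h * R5.v1hi = 1 := by
  show L _ * L _ = 1; rw [L_mul, show ((0,0,0,0,1):ℤ×ℤ×ℤ×ℤ×ℤ) + (0,0,0,0,-1) = 0 by simp [Prod.ext_iff], L_zero]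

lemma inv_determined (f : R5 →+* R5) {a a' b b' : R5} (ha : a * a' = 1) (hb : b * b' = 1)
    (hfa : f a = b) : f a' = b' := by
  calc f a' = f a' * (b * b') := by rw [hb, mul_one]
    _ = (f a' * f a) * b' := by rw [← hfa, mul_assoc]
    _ = f (a * a') * b' := by rw [← map_mul, mul_comm a' a]
    _ = b' := by rw [ha, map_one, one_mul]

def swapE : (ℤ × ℤ × ℤ × ℤ × ℤ) ≃+ (ℤ × ℤ × ℤ × ℤ × ℤ) :=
  (AddEquiv.refl ℤ).prodCongr ((AddEquiv.refl ℤ).prodCongr ((AddEquiv.refl ℤ).prodCongr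
    (AddEquiv.prodComm : ℤ × ℤ ≃+ ℤ × ℤ)))

def theta0 : R5 ≃+* R5 := (AddMonoidAlgebra.domCongr ℤ ℤ swapE).toRingEquiv

lemma theta0_spec : ThetaMinus theta0 := by
  refine ⟨?_, ?_, ?_, ?_, ?_⟩ <;>
    simp [theta0, q4, u0h, u1h, v0h, v1h, AddMonoidAlgebra.domCongr_single, swapE] <;> rfl

lemma theta_unique : ∃! θ : R5 ≃+* R5, ThetaMinus θ := by
  refine ⟨theta0, theta0_spec, fun θ hθ => ?_⟩
  have := homExt θ.toRingHom theta0.toRingHom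
    (hθ.1.trans theta0_spec.1.symm) (hθ.2.1.trans theta0_spec.2.1.symm)
    (hθ.2.2.1.trans theta0_spec.2.2.1.symm) (hθ.2.2.2.1.trans theta0_spec.2.2.2.1.symm)
    (hθ.2.2.2.2.trans theta0_spec.2.2.2.2.symm)
  exact RingEquiv.toRingHom_injective this

lemma theta_q4i {θ : R5 ≃+* R5} (hθ : ThetaMinus θ) : θ R5.q4i = R5.q4i :=
  inv_determined θ.toRingHom q4_pair q4_pair hθ.1
lemma theta_u0hi {θ : R5 ≃+* R5} (hθ : ThetaMinus θ) : θ R5.u0hi = R5.u0hi :=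
  inv_determined θ.toRingHom u0h_pair u0h_pair hθ.2.1
lemma theta_u1hi {θ : R5 ≃+* R5} (hθ : ThetaMinus θ) : θ R5.u1hi = R5.u1hi :=
  inv_determined θ.toRingHom u1h_pair u1h_pair hθ.2.2.1
lemma theta_v0hi {θ : R5 ≃+* R5} (hθ : ThetaMinus θ) : θ R5.v0hi = R5.v1hi :=
  inv_determined θ.toRingHom v0h_pair v1h_pair hθ.2.2.2.1
lemma theta_v1hi {θ : R5 ≃+* R5} (hθ : ThetaMinus θ) : θ R5.v1hi = R5.v0hi :=
  inv_determined θ.toRingHom v1h_pair v0h_pair hθ.2.2.2.2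

lemma theta_invol {θ : R5 ≃+* R5} (hθ : ThetaMinus θ) (r : R5) : θ (θ r) = r := by
  have : θ.toRingHom.comp θ.toRingHom = RingHom.id R5 := by
    apply homExt <;> simp [hθ.1, hθ.2.1, hθ.2.2.1, hθ.2.2.2.1, hθ.2.2.2.2]
  exact DFunLike.congr_fun this r

end R5aux

namespace Haux
open H

lemma c_comm (r : R5) (x : H) : c r * x = x * c r := Algebra.commutes r x

lemma hmul_sub (x y z : H) : x * (y - z) = x * y - x * z := mul_sub x y z
lemma hsub_mul (x y z : H) : (x - y) * z = x * z - y * z := sub_mul x y z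
lemma hmul_add (x y z : H) : x * (y + z) = x * y + x * z := mul_add x y z
lemma hadd_mul (x y z : H) : (x + y) * z = x * z + y * z := add_mul x y z
lemma hsub_eq_zero {x y : H} (h : x - y = 0) : x = y := sub_eq_zero.mp h
lemma hmap_sub (f : H →+* H) (x y : H) : f (x - y) = f x - f y := map_sub f x y
lemma hmap_add (f : H →+* H) (x y : H) : f (x + y) = f x + f y := map_add f x y
lemma hmap_mul (f : H →+* H) (x y : H) : f (x * y) = f x * f y := map_mul f x y
lemma emap_sub (f : H ≃+* H) (x y : H) : f (x - y) = f x - f y := map_sub f x y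
lemma emap_add (f : H ≃+* H) (x y : H) : f (x + y) = f x + f y := map_add f x y
lemma emap_mul (f : H ≃+* H) (x y : H) : f (x * y) = f x * f y := map_mul f x y
lemma c_mul (r s : R5) : c r * c s = c (r * s) := (map_mul (algebraMap R5 H) r s).symm
lemma c_one : c (1 : R5) = 1 := map_one (algebraMap R5 H)

lemma hU0 : (U0 - c R5.u0h) * (U0 + c R5.u0hi) = 0 := by
  have h := RingQuot.mkAlgHom_rel R5 Crel.heckeU0
  rw [map_mul, map_sub, map_add, AlgHom.commutes, AlgHom.commutes, map_zero] at h
  exact h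

lemma hU1 : (U1 - c R5.u1h) * (U1 + c R5.u1hi) = 0 := by
  have h := RingQuot.mkAlgHom_rel R5 Crel.heckeU1
  rw [map_mul, map_sub, map_add, AlgHom.commutes, AlgHom.commutes, map_zero] at h
  exact h

lemma hV0 : (V0 - c R5.v0h) * (V0 + c R5.v0hi) = 0 := by
  have h := RingQuot.mkAlgHom_rel R5 Crel.heckeV0
  rw [map_mul, map_sub, map_add, AlgHom.commutes, AlgHom.commutes, map_zero] at h
  exact h

lemma hV1 : (V1 - c R5.v1h) * (V1 + c R5.v1hi) = 0 := by
  have h := RingQuot.mkAlgHom_rel R5 Crel.heckeV1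
  rw [map_mul, map_sub, map_add, AlgHom.commutes, AlgHom.commutes, map_zero] at h
  exact h

lemma hQ : c R5.q4 * V1 * V0 * U0 * U1 = 1 := by
  have h := RingQuot.mkAlgHom_rel R5 Crel.unit
  rw [map_mul, map_mul, map_mul, map_mul, AlgHom.commutes, map_one] at h
  exact h

lemma mk_inv {x : H} {a b : R5} (hab : a * b = 1) (h : (x - c a) * (x + c b) = 0) :
    x * (x - c a + c b) = 1 ∧ (x - c a + c b) * x = 1 := by
  have hone : c a * c b = 1 := by rw [c_mul, hab, c_one]
  rw [hsub_mul, hmul_add, hmul_add] at h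
  have hx : x * x + x * c b = c a * x + c a * c b := hsub_eq_zero h
  constructor
  · rw [hmul_add, hmul_sub, ← c_comm a x]
    calc x * x - c a * x + x * c b = (x * x + x * c b) - c a * x := by abel
      _ = (c a * x + c a * c b) - c a * x := by rw [hx]
      _ = c a * c b := by abel
      _ = 1 := hone
  · rw [hadd_mul, hsub_mul]
    calc x * x - c a * x + c b * x = (x * x + c b * x) - c a * x := by abel
      _ = (x * x + x * c b) - c a * x := by rw [c_comm b x]
      _ = (c a * x + c a * c b) - c a * x := by rw [hx]
      _ = c a * c b := by abel
      _ = 1 := hone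

lemma U0_inv : U0 * U0i = 1 ∧ U0i * U0 = 1 := mk_inv R5aux.u0h_pair hU0
lemma U1_inv : U1 * U1i = 1 ∧ U1i * U1 = 1 := mk_inv R5aux.u1h_pair hU1
lemma V0_inv : V0 * V0i = 1 ∧ V0i * V0 = 1 := mk_inv R5aux.v0h_pair hV0
lemma V1_inv : V1 * V1i = 1 ∧ V1i * V1 = 1 := mk_inv R5aux.v1h_pair hV1

def uU0 : Hˣ := ⟨U0, U0i, U0_inv.1, U0_inv.2⟩
def uU1 : Hˣ := ⟨U1, U1i, U1_inv.1, U1_inv.2⟩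
def uV0 : Hˣ := ⟨V0, V0i, V0_inv.1, V0_inv.2⟩
def uV1 : Hˣ := ⟨V1, V1i, V1_inv.1, V1_inv.2⟩
def uQ : Hˣ := ⟨c R5.q4, c R5.q4i, by rw [c_mul, R5aux.q4_pair, c_one],
  by rw [c_mul, mul_comm, R5aux.q4_pair, c_one]⟩

@[simp] lemma uU0_val : ((uU0 : Hˣ) : H) = U0 := rfl
@[simp] lemma uU1_val : ((uU1 : Hˣ) : H) = U1 := rfl
@[simp] lemma uV0_val : ((uV0 : Hˣ) : H) = V0 := rfl
@[simp] lemma uV1_val : ((uV1 : Hˣ) : H) = V1 := rfl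
@[simp] lemma uQ_val : ((uQ : Hˣ) : H) = c R5.q4 := rfl
@[simp] lemma uU0i_val : ((uU0⁻¹ : Hˣ) : H) = U0i := rfl
@[simp] lemma uU1i_val : ((uU1⁻¹ : Hˣ) : H) = U1i := rfl
@[simp] lemma uV0i_val : ((uV0⁻¹ : Hˣ) : H) = V0i := rfl
@[simp] lemma uV1i_val : ((uV1⁻¹ : Hˣ) : H) = V1i := rfl
@[simp] lemma uQi_val : ((uQ⁻¹ : Hˣ) : H) = c R5.q4i := rfl

lemma hQu : uQ * uV1 * uV0 * uU0 * uU1 = 1 :=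
  Units.ext (by simp only [Units.val_mul, Units.val_one, uQ_val, uV1_val, uV0_val,
    uU0_val, uU1_val]; exact hQ)

lemma uQ_comm (u : Hˣ) : uQ * u = u * uQ :=
  Units.ext (by simp only [Units.val_mul, uQ_val]; exact c_comm _ _)

lemma uQi_comm (u : Hˣ) : uQ⁻¹ * u = u * uQ⁻¹ :=
  Units.ext (by simp only [Units.val_mul, uQi_val]; exact c_comm _ _)

lemma hA : uV1 * uV0 * uU0 * uU1 = uQ⁻¹ := by
  calc uV1 * uV0 * uU0 * uU1 = uQ⁻¹ * (uQ * uV1 * uV0 * uU0 * uU1) := by group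
    _ = uQ⁻¹ := by rw [hQu, mul_one]

lemma hB : uV1 * uV0 = uQ⁻¹ * uU1⁻¹ * uU0⁻¹ := by
  calc uV1 * uV0 = (uV1 * uV0 * uU0 * uU1) * uU1⁻¹ * uU0⁻¹ := by group
    _ = uQ⁻¹ * uU1⁻¹ * uU0⁻¹ := by rw [hA]

lemma ukeyV0 : (uQ⁻¹ * uV1⁻¹) * (uU1⁻¹ * uU0⁻¹) = uV0 := by
  calc (uQ⁻¹ * uV1⁻¹) * (uU1⁻¹ * uU0⁻¹) = (uV1⁻¹ * uQ⁻¹) * (uU1⁻¹ * uU0⁻¹) := by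
        rw [uQi_comm]
    _ = uV1⁻¹ * (uQ⁻¹ * uU1⁻¹ * uU0⁻¹) := by group
    _ = uV1⁻¹ * (uV1 * uV0) := by rw [← hB]
    _ = uV0 := by group

lemma keyV0 : c R5.q4i * V1i * YYi = V0 := by
  have := congrArg (Units.val) ukeyV0
  simpa only [Units.val_mul, uQi_val, uV1i_val, uU1i_val, uU0i_val, uV0_val, YYi] using this

lemma ukeyV0i : uV0⁻¹ = (uQ * uU0) * (uU1 * uV1) := by
  calc uV0⁻¹ = uU0 * uU1 * ((uV1 * uV0 * uU0 * uU1)⁻¹) * uV1 := by group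
    _ = uU0 * uU1 * ((uQ⁻¹)⁻¹) * uV1 := by rw [hA]
    _ = (uU0 * uU1) * uQ * uV1 := by group
    _ = uQ * (uU0 * uU1) * uV1 := by rw [← uQ_comm (uU0 * uU1)]
    _ = (uQ * uU0) * (uU1 * uV1) := by group

lemma keyV0i : V0i = c R5.q4 * U0 * XXi := by
  have := congrArg (Units.val) ukeyV0i
  simpa only [Units.val_mul, uQ_val, uU0_val, uU1_val, uV1_val, uV0i_val, XXi] using this

lemma tau_unit : c R5.q4 * V0 * (V0i * V1 * V0) * U0 * U1 = 1 := by
  have u : uQ * uV0 * (uV0⁻¹ * uV1 * uV0) * uU0 * uU1 = 1 := by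
    calc uQ * uV0 * (uV0⁻¹ * uV1 * uV0) * uU0 * uU1
        = uQ * uV1 * uV0 * uU0 * uU1 := by group
      _ = 1 := hQu
  have := congrArg (Units.val) u
  simpa only [Units.val_mul, Units.val_one, uQ_val, uV0_val, uV0i_val, uV1_val,
    uU0_val, uU1_val] using this

lemma sig_unit : c R5.q4 * (V1 * V0 * V1i) * V1 * U0 * U1 = 1 := by
  have u : uQ * (uV1 * uV0 * uV1⁻¹) * uV1 * uU0 * uU1 = 1 := by
    calc uQ * (uV1 * uV0 * uV1⁻¹) * uV1 * uU0 * uU1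
        = uQ * uV1 * uV0 * uU0 * uU1 := by group
      _ = 1 := hQu
  have := congrArg (Units.val) u
  simpa only [Units.val_mul, Units.val_one, uQ_val, uV0_val, uV1i_val, uV1_val,
    uU0_val, uU1_val] using this

lemma comp1 : V0 * (V0i * V1 * V0) * V0i = V1 := by
  have u : uV0 * (uV0⁻¹ * uV1 * uV0) * uV0⁻¹ = uV1 := by group
  have := congrArg (Units.val) u
  simpa only [Units.val_mul, uV0_val, uV0i_val, uV1_val] using this

lemma comp2 : V1i * (V1 * V0 * V1i) * V1 = V0 := by
  have u : uV1⁻¹ * (uV1 * uV0 * uV1⁻¹) * uV1 = uV0 := by group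
  have := congrArg (Units.val) u
  simpa only [Units.val_mul, uV1_val, uV1i_val, uV0_val] using this

lemma conj_hecke (x g gi : H) (hg : g * gi = 1) (hgi : gi * g = 1) (a b : R5)
    (h : (x - c a) * (x + c b) = 0) :
    (gi * x * g - c a) * (gi * x * g + c b) = 0 := by
  have h1 : gi * c a * g = c a := by rw [← c_comm a gi, mul_assoc, hgi, mul_one]
  have h2 : gi * c b * g = c b := by rw [← c_comm b gi, mul_assoc, hgi, mul_one]
  have e1 : gi * x * g - c a = gi * (x - c a) * g := by rw [hmul_sub, hsub_mul, h1]
  have e2 : gi * x * g + c b = gi * (x + c b) * g := by rw [hmul_add, hadd_mul, h2]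
  rw [e1, e2]
  have e3 : ∀ p q : H, (gi * p * g) * (gi * q * g) = gi * (p * (g * gi) * (q * g)) :=
    fun p q => by noncomm_ring
  rw [e3, hg, mul_one, ← mul_assoc (x - c a) (x + c b) g, h, zero_mul, mul_zero]

/-! ### the semilinear lift machinery -/

def twAlg (θ : R5 ≃+* R5) : Algebra R5 H :=
  RingHom.toAlgebra' ((algebraMap R5 H).comp θ.toRingHom) fun r x => c_comm (θ r) x

def liftA (θ : R5 ≃+* R5) (t : Cgen → H) :=
  @FreeAlgebra.lift R5 Cgen _ H _ (twAlg θ) t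

def liftHom (θ : R5 ≃+* R5) (t : Cgen → H) : FreeAlgebra R5 Cgen →+* H :=
  @AlgHom.toRingHom R5 (FreeAlgebra R5 Cgen) H _ _ _ _ (twAlg θ) (liftA θ t)

lemma liftHom_ι (θ : R5 ≃+* R5) (t : Cgen → H) (x : Cgen) :
    liftHom θ t (FreeAlgebra.ι R5 x) = t x :=
  @FreeAlgebra.lift_ι_apply R5 Cgen _ H _ (twAlg θ) t x

lemma liftHom_alg (θ : R5 ≃+* R5) (t : Cgen → H) (r : R5) :
    liftHom θ t (algebraMap R5 (FreeAlgebra R5 Cgen) r) = c (θ r) :=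
  @AlgHom.commutes R5 (FreeAlgebra R5 Cgen) H _ _ _ _ (twAlg θ) (liftA θ t) r

def tval : Cgen → H
  | .u0 => U0
  | .u1 => U1
  | .v0 => V0i * V1 * V0
  | .v1 => V0

def sval : Cgen → H
  | .u0 => U0
  | .u1 => U1
  | .v0 => V1
  | .v1 => V1 * V0 * V1i

lemma tval_rel {θ : R5 ≃+* R5} (hθ : ThetaMinus θ) :
    ∀ ⦃x y⦄, Crel x y → liftHom θ tval x = liftHom θ tval y := by
  intro x y h
  obtain ⟨t1, t2, t3, t4, t5⟩ := hθ
  cases h with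
  | heckeU0 =>
      rw [map_mul, map_sub, map_add, liftHom_ι, liftHom_alg, liftHom_alg, map_zero,
        t2, R5aux.theta_u0hi ⟨t1, t2, t3, t4, t5⟩]
      exact hU0
  | heckeU1 =>
      rw [map_mul, map_sub, map_add, liftHom_ι, liftHom_alg, liftHom_alg, map_zero,
        t3, R5aux.theta_u1hi ⟨t1, t2, t3, t4, t5⟩]
      exact hU1
  | heckeV0 =>
      rw [map_mul, map_sub, map_add, liftHom_ι, liftHom_alg, liftHom_alg, map_zero,
        t4, R5aux.theta_v0hi ⟨t1, t2, t3, t4, t5⟩]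
      exact conj_hecke V1 V0 V0i V0_inv.1 V0_inv.2 _ _ hV1
  | heckeV1 =>
      rw [map_mul, map_sub, map_add, liftHom_ι, liftHom_alg, liftHom_alg, map_zero,
        t5, R5aux.theta_v1hi ⟨t1, t2, t3, t4, t5⟩]
      exact hV0
  | unit =>
      rw [map_mul, map_mul, map_mul, map_mul, liftHom_ι, liftHom_ι, liftHom_ι, liftHom_ι,
        liftHom_alg, map_one, t1]
      exact tau_unit

lemma sval_rel {θ : R5 ≃+* R5} (hθ : ThetaMinus θ) :
    ∀ ⦃x y⦄, Crel x y → liftHom θ sval x = liftHom θ sval y := by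
  intro x y h
  obtain ⟨t1, t2, t3, t4, t5⟩ := hθ
  cases h with
  | heckeU0 =>
      rw [map_mul, map_sub, map_add, liftHom_ι, liftHom_alg, liftHom_alg, map_zero,
        t2, R5aux.theta_u0hi ⟨t1, t2, t3, t4, t5⟩]
      exact hU0
  | heckeU1 =>
      rw [map_mul, map_sub, map_add, liftHom_ι, liftHom_alg, liftHom_alg, map_zero,
        t3, R5aux.theta_u1hi ⟨t1, t2, t3, t4, t5⟩]
      exact hU1
  | heckeV0 =>
      rw [map_mul, map_sub, map_add, liftHom_ι, liftHom_alg, liftHom_alg, map_zero,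
        t4, R5aux.theta_v0hi ⟨t1, t2, t3, t4, t5⟩]
      exact hV1
  | heckeV1 =>
      rw [map_mul, map_sub, map_add, liftHom_ι, liftHom_alg, liftHom_alg, map_zero,
        t5, R5aux.theta_v1hi ⟨t1, t2, t3, t4, t5⟩]
      exact conj_hecke V0 V1i V1 V1_inv.2 V1_inv.1 _ _ hV0
  | unit =>
      rw [map_mul, map_mul, map_mul, map_mul, liftHom_ι, liftHom_ι, liftHom_ι, liftHom_ι,
        liftHom_alg, map_one, t1]
      exact sig_unit

def tauH (θ : R5 ≃+* R5) (hθ : ThetaMinus θ) : H →+* H :=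
  RingQuot.lift ⟨liftHom θ tval, tval_rel hθ⟩

def sigH (θ : R5 ≃+* R5) (hθ : ThetaMinus θ) : H →+* H :=
  RingQuot.lift ⟨liftHom θ sval, sval_rel hθ⟩

lemma mk_eq (a : FreeAlgebra R5 Cgen) :
    RingQuot.mkAlgHom R5 Crel a = RingQuot.mkRingHom Crel a := by
  rw [← RingQuot.mkAlgHom_coe R5 Crel]; rfl

lemma tauH_mk (θ : R5 ≃+* R5) (hθ : ThetaMinus θ) (a : FreeAlgebra R5 Cgen) :
    tauH θ hθ (RingQuot.mkAlgHom R5 Crel a) = liftHom θ tval a := by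
  rw [mk_eq]; exact RingQuot.lift_mkRingHom_apply _ (tval_rel hθ) a

lemma sigH_mk (θ : R5 ≃+* R5) (hθ : ThetaMinus θ) (a : FreeAlgebra R5 Cgen) :
    sigH θ hθ (RingQuot.mkAlgHom R5 Crel a) = liftHom θ sval a := by
  rw [mk_eq]; exact RingQuot.lift_mkRingHom_apply _ (sval_rel hθ) a

lemma c_mk (r : R5) : c r = RingQuot.mkAlgHom R5 Crel (algebraMap R5 _ r) :=
  (AlgHom.commutes _ r).symm

lemma tauH_c (θ : R5 ≃+* R5) (hθ : ThetaMinus θ) (r : R5) : tauH θ hθ (c r) = c (θ r) := by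
  rw [c_mk, tauH_mk, liftHom_alg]

lemma sigH_c (θ : R5 ≃+* R5) (hθ : ThetaMinus θ) (r : R5) : sigH θ hθ (c r) = c (θ r) := by
  rw [c_mk, sigH_mk, liftHom_alg]

lemma tauH_U0 (θ : R5 ≃+* R5) (hθ : ThetaMinus θ) : tauH θ hθ U0 = U0 :=
  (tauH_mk θ hθ (FreeAlgebra.ι R5 Cgen.u0)).trans (liftHom_ι θ tval Cgen.u0)
lemma tauH_U1 (θ : R5 ≃+* R5) (hθ : ThetaMinus θ) : tauH θ hθ U1 = U1 :=
  (tauH_mk θ hθ (FreeAlgebra.ι R5 Cgen.u1)).trans (liftHom_ι θ tval Cgen.u1)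
lemma tauH_V0 (θ : R5 ≃+* R5) (hθ : ThetaMinus θ) : tauH θ hθ V0 = V0i * V1 * V0 :=
  (tauH_mk θ hθ (FreeAlgebra.ι R5 Cgen.v0)).trans (liftHom_ι θ tval Cgen.v0)
lemma tauH_V1 (θ : R5 ≃+* R5) (hθ : ThetaMinus θ) : tauH θ hθ V1 = V0 :=
  (tauH_mk θ hθ (FreeAlgebra.ι R5 Cgen.v1)).trans (liftHom_ι θ tval Cgen.v1)

lemma sigH_U0 (θ : R5 ≃+* R5) (hθ : ThetaMinus θ) : sigH θ hθ U0 = U0 :=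
  (sigH_mk θ hθ (FreeAlgebra.ι R5 Cgen.u0)).trans (liftHom_ι θ sval Cgen.u0)
lemma sigH_U1 (θ : R5 ≃+* R5) (hθ : ThetaMinus θ) : sigH θ hθ U1 = U1 :=
  (sigH_mk θ hθ (FreeAlgebra.ι R5 Cgen.u1)).trans (liftHom_ι θ sval Cgen.u1)
lemma sigH_V0 (θ : R5 ≃+* R5) (hθ : ThetaMinus θ) : sigH θ hθ V0 = V1 :=
  (sigH_mk θ hθ (FreeAlgebra.ι R5 Cgen.v0)).trans (liftHom_ι θ sval Cgen.v0)
lemma sigH_V1 (θ : R5 ≃+* R5) (hθ : ThetaMinus θ) : sigH θ hθ V1 = V1 * V0 * V1i :=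
  (sigH_mk θ hθ (FreeAlgebra.ι R5 Cgen.v1)).trans (liftHom_ι θ sval Cgen.v1)

lemma Hext (f g : H →+* H) (h0 : ∀ r, f (c r) = g (c r)) (hu0 : f U0 = g U0)
    (hu1 : f U1 = g U1) (hv0 : f V0 = g V0) (hv1 : f V1 = g V1) : f = g := by
  refine RingHom.ext fun x => ?_
  obtain ⟨y, rfl⟩ := RingQuot.mkAlgHom_surjective R5 Crel x
  refine FreeAlgebra.induction R5 Cgen ?_ ?_ ?_ ?_ y
  · intro r
    rw [AlgHom.commutes]
    exact h0 r
  · intro x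
    cases x
    · exact hu0
    · exact hu1
    · exact hv0
    · exact hv1
  · intro a b ha hb
    rw [map_mul, hmap_mul, hmap_mul, ha, hb]
  · intro a b ha hb
    rw [map_add, hmap_add, hmap_add, ha, hb]

lemma tauH_V1i (θ : R5 ≃+* R5) (hθ : ThetaMinus θ) : tauH θ hθ V1i = V0i := by
  rw [show V1i = V1 - c R5.v1h + c R5.v1hi from rfl, hmap_add, hmap_sub, tauH_V1,
    tauH_c, tauH_c, hθ.2.2.2.2, R5aux.theta_v1hi hθ]
  rfl

lemma sigH_V0i (θ : R5 ≃+* R5) (hθ : ThetaMinus θ) : sigH θ hθ V0i = V1i := by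
  rw [show V0i = V0 - c R5.v0h + c R5.v0hi from rfl, hmap_add, hmap_sub, sigH_V0,
    sigH_c, sigH_c, hθ.2.2.2.1, R5aux.theta_v0hi hθ]
  rfl

end Haux
/-- there is a unique ring automorphism `τ₋` of `H`, semilinear over `θ₋`,
with `τ₋(U₀) = U₀`, `τ₋(U₁) = U₁`, `τ₋(V₁) = q^{−1/4}·V₁⁻¹·𝕐⁻¹ (= V₀)`,
`τ₋(V₀) = V₀⁻¹·V₁·V₀`; it satisfies `τ₋(𝕐) = 𝕐` and
`τ₋(𝕏) = V₀⁻¹·U₁⁻¹ = q^{1/4}·U₀·𝕏⁻¹·U₁⁻¹`. -/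
theorem statement8 :
    (∃! θ : R5 ≃+* R5, ThetaMinus θ) ∧
    ∀ θ : R5 ≃+* R5, ThetaMinus θ →
      (∃! τ : H ≃+* H, TauMinus θ τ) ∧
      (c R5.q4i * V1i * YYi = V0) ∧
      ∀ τ : H ≃+* H, TauMinus θ τ →
        τ YY = YY ∧ τ XX = V0i * U1i ∧ V0i * U1i = c R5.q4 * U0 * XXi * U1i := by
  refine ⟨R5aux.theta_unique, fun θ hθ => ⟨?_, Haux.keyV0, fun τ hτ => ?_⟩⟩
  · -- existence and uniqueness of τ
    have hst : ((Haux.sigH θ hθ : H →+* H)).comp (Haux.tauH θ hθ) = RingHom.id H := by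
      apply Haux.Hext
      · intro r
        rw [RingHom.comp_apply, Haux.tauH_c, Haux.sigH_c, R5aux.theta_invol hθ,
          RingHom.id_apply]
      · rw [RingHom.comp_apply, Haux.tauH_U0, Haux.sigH_U0, RingHom.id_apply]
      · rw [RingHom.comp_apply, Haux.tauH_U1, Haux.sigH_U1, RingHom.id_apply]
      · rw [RingHom.comp_apply, Haux.tauH_V0, Haux.hmap_mul, Haux.hmap_mul, Haux.sigH_V0i,
          Haux.sigH_V1, Haux.sigH_V0, RingHom.id_apply]
        exact Haux.comp2
      · rw [RingHom.comp_apply, Haux.tauH_V1, Haux.sigH_V0, RingHom.id_apply]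
    have hts : ((Haux.tauH θ hθ : H →+* H)).comp (Haux.sigH θ hθ) = RingHom.id H := by
      apply Haux.Hext
      · intro r
        rw [RingHom.comp_apply, Haux.sigH_c, Haux.tauH_c, R5aux.theta_invol hθ,
          RingHom.id_apply]
      · rw [RingHom.comp_apply, Haux.sigH_U0, Haux.tauH_U0, RingHom.id_apply]
      · rw [RingHom.comp_apply, Haux.sigH_U1, Haux.tauH_U1, RingHom.id_apply]
      · rw [RingHom.comp_apply, Haux.sigH_V0, Haux.tauH_V1, RingHom.id_apply]
      · rw [RingHom.comp_apply, Haux.sigH_V1, Haux.hmap_mul, Haux.hmap_mul, Haux.tauH_V1i,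
          Haux.tauH_V1, Haux.tauH_V0, RingHom.id_apply]
        exact Haux.comp1
    refine ⟨RingEquiv.ofRingHom (Haux.tauH θ hθ) (Haux.sigH θ hθ) hts hst,
      ⟨fun r => ?_, ?_, ?_, ?_, ?_⟩, fun τ' hτ' => ?_⟩
    · exact (Haux.tauH_c θ hθ r)
    · exact Haux.tauH_U0 θ hθ
    · exact Haux.tauH_U1 θ hθ
    · exact (Haux.tauH_V1 θ hθ).trans Haux.keyV0.symm
    · exact Haux.tauH_V0 θ hθ
    · -- uniqueness
      obtain ⟨hs, h1, h2, h3, h4⟩ := hτ'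
      have key : (τ' : H →+* H) = Haux.tauH θ hθ := by
        apply Haux.Hext
        · intro r
          exact (hs r).trans (Haux.tauH_c θ hθ r).symm
        · exact h1.trans (Haux.tauH_U0 θ hθ).symm
        · exact h2.trans (Haux.tauH_U1 θ hθ).symm
        · exact h4.trans (Haux.tauH_V0 θ hθ).symm
        · exact (h3.trans Haux.keyV0).trans (Haux.tauH_V1 θ hθ).symm
      exact RingEquiv.ext fun x => DFunLike.congr_fun key x
  · -- properties of any τ
    obtain ⟨hs, h1, h2, h3, h4⟩ := hτ
    have hV1i : τ V1i = V0i := by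
      rw [show V1i = V1 - c R5.v1h + c R5.v1hi from rfl, Haux.emap_add, Haux.emap_sub, h3,
        Haux.keyV0, show τ (c R5.v1h) = τ (algebraMap R5 H R5.v1h) from rfl, hs,
        show τ (c R5.v1hi) = τ (algebraMap R5 H R5.v1hi) from rfl, hs,
        hθ.2.2.2.2, R5aux.theta_v1hi hθ]
      rfl
    have hU1i : τ U1i = U1i := by
      rw [show U1i = U1 - c R5.u1h + c R5.u1hi from rfl, Haux.emap_add, Haux.emap_sub, h2,
        show τ (c R5.u1h) = τ (algebraMap R5 H R5.u1h) from rfl, hs,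
        show τ (c R5.u1hi) = τ (algebraMap R5 H R5.u1hi) from rfl, hs,
        hθ.2.2.1, R5aux.theta_u1hi hθ]
      rfl
    refine ⟨?_, ?_, ?_⟩
    · rw [show YY = U0 * U1 from rfl, Haux.emap_mul, h1, h2]
    · rw [show XX = V1i * U1i from rfl, Haux.emap_mul, hV1i, hU1i]
    · rw [Haux.keyV0i]
end
end

section
/- Let θ_φ be the ring automorphism of R that interchanges u₀^{1/2} and v₁^{1/2} and fixes q^{1/4}, u₁^{1/2}, v₀^{1/2}. There exists a unique ring anti-automorphism φ of H (φ(a·b) = φ(b)·φ(a)), semilinear over θ_φ, with φ(U₀) = V₁, φ(V₁) = U₀, φ(U₁) = U₁, φ(V₀) = V₀. It satisfies φ(𝕏) = 𝕐⁻¹, φ(𝕐) = 𝕏⁻¹, φ ∘ φ = id, and, with τ₊, τ₋ the semilinear automorphisms of H determined respectively by (U₁ ↦ U₁, V₁ ↦ V₁, U₀ ↦ q^{−1/4}·𝕏·U₀⁻¹, V₀ ↦ q^{−1/4}·𝕏·V₀⁻¹, over the swap u₀^{1/2} ↔ v₀^{1/2}) and (U₀ ↦ U₀, U₁ ↦ U₁,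 V₁ ↦ q^{−1/4}·V₁⁻¹·𝕐⁻¹, V₀ ↦ V₀⁻¹·V₁·V₀, over the swap v₀^{1/2} ↔ v₁^{1/2}), one has φ ∘ τ₊ ∘ φ = τ₋ and φ ∘ τ₋ ∘ φ = τ₊. -/
noncomputable section

open H

/-- `θ_φ` interchanges `u₀^{1/2}` and `v₁^{1/2}` fixing `q^{1/4}, u₁^{1/2}, v₀^{1/2}`. -/
def ThetaPhi (θ : R5 ≃+* R5) : Prop :=
  θ R5.q4 = R5.q4 ∧ θ R5.u1h = R5.u1h ∧ θ R5.v0h = R5.v0h ∧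
  θ R5.u0h = R5.v1h ∧ θ R5.v1h = R5.u0h

/-- conditions on `φ`: a bijective, additive, unital, multiplication-reversing map,
semilinear over `θ_φ`, with the prescribed values on generators. -/
def PhiMap (θ : R5 ≃+* R5) (f : H → H) : Prop :=
  Function.Bijective f ∧ (∀ a b : H, f (a + b) = f a + f b) ∧ f 1 = 1 ∧
  (∀ a b : H, f (a * b) = f b * f a) ∧ Semilin θ f ∧
  f U0 = V1 ∧ f V1 = U0 ∧ f U1 = U1 ∧ f V0 = V0

namespace Statement11Aux

open MulOpposite H AddMonoidAlgebra

abbrev G5 := ℤ × ℤ × ℤ × ℤ × ℤ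

theorem cancel {S : Type*} [CommMonoid S] {a b c : S} (h1 : a * b = 1) (h2 : a * c = 1) :
    b = c := by
  calc b = b * (a * c) := by rw [h2, mul_one]
  _ = (a * b) * c := by rw [← mul_assoc, mul_comm b a]
  _ = c := by rw [h1, one_mul]

theorem pairR {a b : G5} (h : a + b = 0) :
    (AddMonoidAlgebra.single a (1:ℤ) : R5) * AddMonoidAlgebra.single b 1 = 1 := by
  rw [AddMonoidAlgebra.single_mul_single, h, one_mul, AddMonoidAlgebra.one_def]

theorem q4_q4i : R5.q4 * R5.q4i = 1 := pairR (by decide)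
theorem u0h_u0hi : R5.u0h * R5.u0hi = 1 := pairR (by decide)
theorem u1h_u1hi : R5.u1h * R5.u1hi = 1 := pairR (by decide)
theorem v0h_v0hi : R5.v0h * R5.v0hi = 1 := pairR (by decide)
theorem v1h_v1hi : R5.v1h * R5.v1hi = 1 := pairR (by decide)

/-- two ring homs out of `R5` agreeing on the five positive singles are equal. -/
theorem R5.hom_ext {S : Type*} [CommRing S] {g1 g2 : R5 →+* S}
    (hq : g1 R5.q4 = g2 R5.q4) (hu0 : g1 R5.u0h = g2 R5.u0h) (hu1 : g1 R5.u1h = g2 R5.u1h)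
    (hv0 : g1 R5.v0h = g2 R5.v0h) (hv1 : g1 R5.v1h = g2 R5.v1h) : g1 = g2 := by
  have neg : ∀ (a : G5), g1 (AddMonoidAlgebra.single a 1) = g2 (AddMonoidAlgebra.single a 1) →
      g1 (AddMonoidAlgebra.single (-a) 1) = g2 (AddMonoidAlgebra.single (-a) 1) := by
    intro a h
    have h1 : g1 (AddMonoidAlgebra.single a 1) * g1 (AddMonoidAlgebra.single (-a) 1) = 1 := by
      rw [← map_mul, pairR (by simp), map_one]
    have h2 : g1 (AddMonoidAlgebra.single a 1) * g2 (AddMonoidAlgebra.single (-a) 1) = 1 := by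
      rw [h, ← map_mul, pairR (by simp), map_one]
    exact cancel h1 h2
  apply AddMonoidAlgebra.ringHom_ext
  · intro b
    have hb : (AddMonoidAlgebra.single (0:G5) b : R5) = b • (1 : R5) := by
      rw [AddMonoidAlgebra.one_def, AddMonoidAlgebra.smul_single]; simp
    rw [hb, map_zsmul, map_zsmul, map_one, map_one]
  · -- singles
    set P : G5 → Prop := fun a => g1 (AddMonoidAlgebra.single a 1) = g2 (AddMonoidAlgebra.single a 1) with hP
    have Pmul : ∀ a b, P a → P b → P (a + b) := by
      intro a b ha hb
      have : (AddMonoidAlgebra.single (a+b) (1:ℤ) : R5)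
          = AddMonoidAlgebra.single a 1 * AddMonoidAlgebra.single b 1 := by
        rw [AddMonoidAlgebra.single_mul_single, one_mul]
      simp only [hP] at ha hb ⊢
      rw [this, map_mul, map_mul, ha, hb]
    have P0 : P 0 := by
      simp only [hP]
      rw [← AddMonoidAlgebra.one_def, map_one, map_one]
    have Pz : ∀ (a : G5), P a → P (-a) → ∀ n : ℤ, P (n • a) := by
      intro a ha hna n
      induction n using Int.induction_on with
      | zero => rw [zero_smul]; exact P0
      | succ k ih =>
        have e : ((k:ℤ)+1) • a = (k:ℤ) • a + a := by rw [add_smul, one_smul]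
        rw [e]; exact Pmul _ _ ih ha
      | pred k ih =>
        have e : (-(k:ℤ)-1) • a = (-(k:ℤ)) • a + (-a) := by
          rw [sub_smul, one_smul, sub_eq_add_neg]
        rw [e]; exact Pmul _ _ ih hna
    intro a
    obtain ⟨a1, a2, a3, a4, a5⟩ := a
    have hdec : ((a1, a2, a3, a4, a5) : G5) =
        a1 • ((1,0,0,0,0) : G5) + (a2 • ((0,1,0,0,0) : G5) + (a3 • ((0,0,1,0,0) : G5) +
        (a4 • ((0,0,0,1,0) : G5) + a5 • ((0,0,0,0,1) : G5)))) := by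
      simp [Prod.ext_iff]
    rw [hdec]
    have e1 : P (1,0,0,0,0) := hq
    have e2 : P (0,1,0,0,0) := hu0
    have e3 : P (0,0,1,0,0) := hu1
    have e4 : P (0,0,0,1,0) := hv0
    have e5 : P (0,0,0,0,1) := hv1
    have n1 : P (-(1,0,0,0,0)) := neg _ e1
    have n2 : P (-(0,1,0,0,0)) := neg _ e2
    have n3 : P (-(0,0,1,0,0)) := neg _ e3
    have n4 : P (-(0,0,0,1,0)) := neg _ e4
    have n5 : P (-(0,0,0,0,1)) := neg _ e5
    exact Pmul _ _ (Pz _ e1 n1 a1) (Pmul _ _ (Pz _ e2 n2 a2) (Pmul _ _ (Pz _ e3 n3 a3)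
      (Pmul _ _ (Pz _ e4 n4 a4) (Pz _ e5 n5 a5))))

end Statement11Aux
namespace Statement11Aux

/-- the swap of the `u₀` and `v₁` exponents -/
def swapE : G5 ≃+ G5 where
  toFun p := (p.1, p.2.2.2.2, p.2.2.1, p.2.2.2.1, p.2.1)
  invFun p := (p.1, p.2.2.2.2, p.2.2.1, p.2.2.2.1, p.2.1)
  left_inv p := rfl
  right_inv p := rfl
  map_add' p q := rfl

/-- the concrete `θ_φ` -/
def θ0 : R5 ≃+* R5 := (AddMonoidAlgebra.domCongr ℤ ℤ swapE).toRingEquiv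

theorem θ0_single (a : G5) (n : ℤ) :
    θ0 (AddMonoidAlgebra.single a n) = AddMonoidAlgebra.single (swapE a) n :=
  AddMonoidAlgebra.domCongr_single (R := ℤ) (A := ℤ) swapE a n

theorem θ0_q4 : θ0 R5.q4 = R5.q4 := θ0_single _ _
theorem θ0_q4i : θ0 R5.q4i = R5.q4i := θ0_single _ _
theorem θ0_u0h : θ0 R5.u0h = R5.v1h := θ0_single _ _
theorem θ0_u0hi : θ0 R5.u0hi = R5.v1hi := θ0_single _ _
theorem θ0_u1h : θ0 R5.u1h = R5.u1h := θ0_single _ _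
theorem θ0_u1hi : θ0 R5.u1hi = R5.u1hi := θ0_single _ _
theorem θ0_v0h : θ0 R5.v0h = R5.v0h := θ0_single _ _
theorem θ0_v0hi : θ0 R5.v0hi = R5.v0hi := θ0_single _ _
theorem θ0_v1h : θ0 R5.v1h = R5.u0h := θ0_single _ _
theorem θ0_v1hi : θ0 R5.v1hi = R5.u0hi := θ0_single _ _

theorem θ0_phi : ThetaPhi θ0 := ⟨θ0_q4, θ0_u1h, θ0_v0h, θ0_u0h, θ0_v1h⟩

theorem theta_unique {θ : R5 ≃+* R5} (h : ThetaPhi θ) : θ = θ0 := by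
  obtain ⟨h1, h2, h3, h4, h5⟩ := h
  have : (θ : R5 →+* R5) = (θ0 : R5 →+* R5) :=
    R5.hom_ext (by simpa [θ0_q4] using h1) (by simpa [θ0_u0h] using h4)
      (by simpa [θ0_u1h] using h2) (by simpa [θ0_v0h] using h3)
      (by simpa [θ0_v1h] using h5)
  exact RingEquiv.ext fun x => RingHom.congr_fun this x

theorem θ0_θ0 (r : R5) : θ0 (θ0 r) = r := by
  have : ((θ0 : R5 →+* R5).comp (θ0 : R5 →+* R5)) = RingHom.id R5 := by
    apply R5.hom_ext <;>
      simp [RingHom.comp_apply, θ0_q4, θ0_u0h, θ0_u1h, θ0_v0h, θ0_v1h, θ0_v1h, θ0_u0h]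
  simpa using RingHom.congr_fun this r

end Statement11Aux
namespace Statement11Aux

theorem Hsub (x y : H) : x - y = x + -y := sub_eq_add_neg x y
theorem Hanc (y : H) : y + -y = 0 := add_neg_cancel y
theorem Hnac (y : H) : -y + y = 0 := neg_add_cancel y
theorem Hmn (x y : H) : x * -y = -(x * y) := by
  calc x * -y = x * -y + (x * y + -(x * y)) := by rw [Hanc, add_zero]
  _ = (x * -y + x * y) + -(x * y) := by rw [add_assoc]
  _ = x * (-y + y) + -(x * y) := by rw [← mul_add]
  _ = -(x * y) := by rw [Hnac, mul_zero, zero_add]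
theorem Hss (x : H) : x - x = 0 := sub_self x
theorem Hnm (x y : H) : -x * y = -(x * y) := by
  calc -x * y = -x * y + (x * y + -(x * y)) := by rw [Hanc, add_zero]
  _ = (-x * y + x * y) + -(x * y) := by rw [add_assoc]
  _ = (-x + x) * y + -(x * y) := by rw [← add_mul]
  _ = -(x * y) := by rw [Hnac, zero_mul, zero_add]

theorem c_mul (r s : R5) : c r * c s = c (r * s) := (map_mul (algebraMap R5 H) r s).symm
theorem c_comm (r : R5) (x : H) : c r * x = x * c r := Algebra.commutes r x
theorem c_zero : c (0 : R5) = 0 := map_zero (algebraMap R5 H)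
theorem c_add (r s : R5) : c (r + s) = c r + c s := map_add (algebraMap R5 H) r s
theorem c_sub (r s : R5) : c (r - s) = c r - c s := map_sub (algebraMap R5 H) r s
theorem c_one : c (1 : R5) = 1 := map_one (algebraMap R5 H)
theorem c_mid (r : R5) (x y : H) : x * (c r * y) = c r * (x * y) := by
  rw [← mul_assoc, ← c_comm, mul_assoc]

theorem sandwich {a b : H} (h : a * b = 1) (x : H) : a * (b * x) = x := by
  rw [← mul_assoc, h, one_mul]

theorem flip_unit {a u ui : H} (hu : u * ui = 1) (hui : ui * u = 1) (h : a * u = 1) :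
    u * a = 1 := by
  have : a = ui := by
    calc a = a * (u * ui) := by rw [hu, mul_one]
    _ = (a * u) * ui := by rw [mul_assoc]
    _ = ui := by rw [h, one_mul]
  rw [this]; exact hu

theorem mk_eq (x : FreeAlgebra R5 Cgen) :
    RingQuot.mkRingHom Crel x = RingQuot.mkAlgHom R5 Crel x := by
  rw [← RingQuot.mkAlgHom_coe R5 Crel]; rfl

theorem heckeH_U0 : (U0 - c R5.u0h) * (U0 + c R5.u0hi) = 0 := by
  have h := RingQuot.mkAlgHom_rel R5 Crel.heckeU0
  rw [map_mul, map_sub, map_add, map_zero, AlgHom.commutes, AlgHom.commutes] at h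
  exact h

theorem heckeH_U1 : (U1 - c R5.u1h) * (U1 + c R5.u1hi) = 0 := by
  have h := RingQuot.mkAlgHom_rel R5 Crel.heckeU1
  rw [map_mul, map_sub, map_add, map_zero, AlgHom.commutes, AlgHom.commutes] at h
  exact h

theorem heckeH_V0 : (V0 - c R5.v0h) * (V0 + c R5.v0hi) = 0 := by
  have h := RingQuot.mkAlgHom_rel R5 Crel.heckeV0
  rw [map_mul, map_sub, map_add, map_zero, AlgHom.commutes, AlgHom.commutes] at h
  exact h

theorem heckeH_V1 : (V1 - c R5.v1h) * (V1 + c R5.v1hi) = 0 := by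
  have h := RingQuot.mkAlgHom_rel R5 Crel.heckeV1
  rw [map_mul, map_sub, map_add, map_zero, AlgHom.commutes, AlgHom.commutes] at h
  exact h

theorem hrel : c R5.q4 * V1 * V0 * U0 * U1 = 1 := by
  have h := RingQuot.mkAlgHom_rel R5 Crel.unit
  rw [map_mul, map_mul, map_mul, map_mul, map_one, AlgHom.commutes] at h
  exact h

theorem inv_pair {X : H} {a b : R5} (hk : (X - c a) * (X + c b) = 0) (hab : a * b = 1) :
    X * (X - c a + c b) = 1 ∧ (X - c a + c b) * X = 1 := by
  have hab' : c a * c b = 1 := by rw [c_mul, hab, c_one]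
  have hba' : c b * c a = 1 := by rw [c_mul, mul_comm, hab, c_one]
  constructor
  · have h1 : X * (X - c a + c b) =
        (X - c a) * (X + c b) + c a * c b + (c a * X - X * c a) := by
      simp only [Hsub, mul_add, add_mul, Hmn, Hnm]; abel
    rw [h1, hk, hab']; simp [c_comm, Hss]
  · have h2 : (X - c a + c b) * X =
        (X - c a) * (X + c b) + c a * c b + (c b * X - X * c b) := by
      simp only [Hsub, mul_add, add_mul, Hmn, Hnm]; abel
    rw [h2, hk, hab']; simp [c_comm, Hss]

theorem reversed {X : H} {a b : R5} (hk : (X - c a) * (X + c b) = 0) :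
    (X + c b) * (X - c a) = 0 := by
  have e : (X + c b) * (X - c a) = (X - c a) * (X + c b) + (c a * X - X * c a)
      + (c b * X - X * c b) + (c a * c b - c b * c a) := by
    simp only [Hsub, mul_add, add_mul, Hmn, Hnm]; abel
  rw [e, hk, c_mul, c_mul, mul_comm a b]; simp [c_comm, Hss]

theorem U0_U0i : U0 * U0i = 1 := (inv_pair heckeH_U0 u0h_u0hi).1
theorem U0i_U0 : U0i * U0 = 1 := (inv_pair heckeH_U0 u0h_u0hi).2
theorem U1_U1i : U1 * U1i = 1 := (inv_pair heckeH_U1 u1h_u1hi).1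
theorem U1i_U1 : U1i * U1 = 1 := (inv_pair heckeH_U1 u1h_u1hi).2
theorem V0_V0i : V0 * V0i = 1 := (inv_pair heckeH_V0 v0h_v0hi).1
theorem V0i_V0 : V0i * V0 = 1 := (inv_pair heckeH_V0 v0h_v0hi).2
theorem V1_V1i : V1 * V1i = 1 := (inv_pair heckeH_V1 v1h_v1hi).1
theorem V1i_V1 : V1i * V1 = 1 := (inv_pair heckeH_V1 v1h_v1hi).2

theorem cq4_cq4i : c R5.q4 * c R5.q4i = 1 := by rw [c_mul, q4_q4i, c_one]
theorem cq4i_cq4 : c R5.q4i * c R5.q4 = 1 := by rw [c_mul, mul_comm, q4_q4i, c_one]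

theorem hrel' : V1 * (V0 * (U0 * U1)) = c R5.q4i := by
  have h := hrel
  have h1 : c R5.q4 * (V1 * (V0 * (U0 * U1))) = 1 := by
    rw [← h]; simp only [mul_assoc]
  calc V1 * (V0 * (U0 * U1)) = c R5.q4i * (c R5.q4 * (V1 * (V0 * (U0 * U1)))) :=
    (sandwich cq4i_cq4 _).symm
  _ = c R5.q4i := by rw [h1, mul_one]

/-- identity A : `V₁V₀ = q^{-1/4} U₁⁻¹ U₀⁻¹` -/
theorem idA : V1 * V0 = c R5.q4i * (U1i * U0i) := by
  have step : V1 * (V0 * (U0 * (U1 * (U1i * U0i)))) = V1 * V0 := by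
    rw [sandwich U1_U1i, U0_U0i, mul_one]
  calc V1 * V0 = V1 * (V0 * (U0 * (U1 * (U1i * U0i)))) := step.symm
  _ = (V1 * (V0 * (U0 * U1))) * (U1i * U0i) := by
    simp only [mul_assoc]
  _ = c R5.q4i * (U1i * U0i) := by rw [hrel']

/-- identity B : `V₀U₀ = q^{-1/4} V₁⁻¹ U₁⁻¹` -/
theorem idB : V0 * U0 = c R5.q4i * (V1i * U1i) := by
  calc V0 * U0 = V1i * (V1 * (V0 * U0)) := (sandwich V1i_V1 _).symm
  _ = V1i * (V1 * (V0 * (U0 * (U1 * U1i)))) := by rw [U1_U1i, mul_one]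
  _ = (V1i * (V1 * (V0 * (U0 * U1)))) * U1i := by simp only [mul_assoc]
  _ = V1i * (c R5.q4i * U1i) := by rw [← hrel']; simp only [mul_assoc]
  _ = c R5.q4i * (V1i * U1i) := by rw [c_mid]

/-- identity for the anti-automorphism unit relation -/
theorem idC : c R5.q4 * (U1 * (V1 * (V0 * U0))) = 1 := by
  rw [idB, c_mid, c_mid, sandwich cq4_cq4i, sandwich V1_V1i, U1_U1i]

end Statement11Aux
namespace Statement11Aux

/-- the opposite of `H`, as a type synonym to carry a twisted `R5`-algebra structure -/
def Hop : Type := Hᵐᵒᵖ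

instance : Ring Hop := inferInstanceAs (Ring Hᵐᵒᵖ)

def mko : H → Hop := fun x => MulOpposite.op x
def uno : Hop → H := fun x => MulOpposite.unop x

@[simp] theorem uno_mko (x : H) : uno (mko x) = x := rfl
@[simp] theorem mko_uno (x : Hop) : mko (uno x) = x := rfl
theorem uno_inj : Function.Injective uno := fun a b h => by
  rw [← mko_uno a, ← mko_uno b, h]
theorem mko_mul (x y : H) : mko (x * y) = mko y * mko x := rfl
theorem uno_mul (x y : Hop) : uno (x * y) = uno y * uno x := rfl
theorem mko_one : mko 1 = 1 := rfl
theorem uno_one : uno (1 : Hop) = 1 := rfl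
theorem mko_add (x y : H) : mko (x + y) = mko x + mko y := rfl
theorem uno_add (x y : Hop) : uno (x + y) = uno x + uno y := rfl
theorem mko_zero : mko 0 = 0 := rfl
theorem mko_sub (x y : H) : mko (x - y) = mko x - mko y := rfl
theorem uno_sub (x y : Hop) : uno (x - y) = uno x - uno y := rfl

/-- the twisted scalar map `R5 →+* Hop` -/
def cop : R5 →+* Hop where
  toFun r := mko (c (θ0 r))
  map_one' := by show mko (c (θ0 1)) = 1; rw [map_one, c_one, mko_one]
  map_mul' r s := by
    show mko (c (θ0 (r * s))) = mko (c (θ0 r)) * mko (c (θ0 s))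
    rw [map_mul, mul_comm (θ0 r) (θ0 s), ← c_mul, mko_mul]
  map_zero' := by show mko (c (θ0 0)) = 0; rw [map_zero, c_zero, mko_zero]
  map_add' r s := by
    show mko (c (θ0 (r + s))) = mko (c (θ0 r)) + mko (c (θ0 s))
    rw [map_add, c_add, mko_add]

theorem cop_apply (r : R5) : cop r = mko (c (θ0 r)) := rfl

instance : Algebra R5 Hop :=
  RingHom.toAlgebra' cop (by
    intro r x
    apply uno_inj
    rw [cop_apply, uno_mul, uno_mul, uno_mko, c_comm])

theorem algebraMap_Hop (r : R5) : algebraMap R5 Hop r = mko (c (θ0 r)) := rfl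

def gens : Cgen → Hop
  | Cgen.u0 => mko V1
  | Cgen.u1 => mko U1
  | Cgen.v0 => mko V0
  | Cgen.v1 => mko U0

/-- the lift of the anti-automorphism to the free algebra -/
def preφ : FreeAlgebra R5 Cgen →ₐ[R5] Hop := FreeAlgebra.lift R5 gens

theorem preφ_ι (g : Cgen) : preφ (FreeAlgebra.ι R5 g) = gens g := by
  simp [preφ]

theorem preφ_alg (r : R5) : preφ (algebraMap R5 _ r) = mko (c (θ0 r)) :=
  preφ.commutes r

theorem preφ_hecke {gH : Cgen} {XH : H} {a b a' b' : R5}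
    (hg : gens gH = mko XH) (ha : θ0 a = a') (hb : θ0 b = b')
    (hH : (XH - c a') * (XH + c b') = 0) :
    preφ ((FreeAlgebra.ι R5 gH - algebraMap R5 _ a) * (FreeAlgebra.ι R5 gH + algebraMap R5 _ b))
      = preφ 0 := by
  rw [map_zero, map_mul, map_sub, map_add, preφ_ι, preφ_alg, preφ_alg, ha, hb, hg,
    ← mko_sub, ← mko_add, ← mko_mul]
  rw [show mko ((XH + c b') * (XH - c a')) = mko 0 from congrArg mko (reversed hH), mko_zero]

theorem preφ_rel : ∀ ⦃x y⦄, Crel x y → preφ x = preφ y := by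
  intro x y h
  cases h with
  | heckeU0 => exact preφ_hecke rfl θ0_u0h θ0_u0hi heckeH_V1
  | heckeU1 => exact preφ_hecke rfl θ0_u1h θ0_u1hi heckeH_U1
  | heckeV0 => exact preφ_hecke rfl θ0_v0h θ0_v0hi heckeH_V0
  | heckeV1 => exact preφ_hecke rfl θ0_v1h θ0_v1hi heckeH_U0
  | unit =>
    rw [map_one, map_mul, map_mul, map_mul, map_mul, preφ_alg, θ0_q4,
      preφ_ι, preφ_ι, preφ_ι, preφ_ι]
    show mko (c R5.q4) * mko U0 * mko V0 * mko V1 * mko U1 = 1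
    rw [← mko_mul, ← mko_mul, ← mko_mul, ← mko_mul, ← mko_one]
    apply congrArg mko
    have e1 : U1 * (V1 * (V0 * (U0 * c R5.q4))) = c R5.q4 * (U1 * (V1 * (V0 * U0))) := by
      rw [← c_comm R5.q4 U0]
      rw [c_mid R5.q4 V0 U0, c_mid R5.q4 V1 (V0 * U0), c_mid R5.q4 U1 (V1 * (V0 * U0))]
    rw [e1]
    exact idC

end Statement11Aux
namespace Statement11Aux

/-- the anti-automorphism as a ring hom into the opposite -/
def Φ : H →+* Hop := RingQuot.lift ⟨preφ.toRingHom, fun _ _ h => preφ_rel h⟩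

theorem Φ_mk (x : FreeAlgebra R5 Cgen) : Φ (RingQuot.mkRingHom Crel x) = preφ x :=
  RingQuot.lift_mkRingHom_apply _ _ x

/-- the anti-automorphism `φ` -/
def f0 : H → H := fun x => uno (Φ x)

theorem f0_U0 : f0 U0 = V1 := by
  show uno (Φ (RingQuot.mkAlgHom R5 Crel (FreeAlgebra.ι R5 Cgen.u0))) = V1
  rw [← mk_eq, Φ_mk, preφ_ι]; rfl

theorem f0_U1 : f0 U1 = U1 := by
  show uno (Φ (RingQuot.mkAlgHom R5 Crel (FreeAlgebra.ι R5 Cgen.u1))) = U1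
  rw [← mk_eq, Φ_mk, preφ_ι]; rfl

theorem f0_V0 : f0 V0 = V0 := by
  show uno (Φ (RingQuot.mkAlgHom R5 Crel (FreeAlgebra.ι R5 Cgen.v0))) = V0
  rw [← mk_eq, Φ_mk, preφ_ι]; rfl

theorem f0_V1 : f0 V1 = U0 := by
  show uno (Φ (RingQuot.mkAlgHom R5 Crel (FreeAlgebra.ι R5 Cgen.v1))) = U0
  rw [← mk_eq, Φ_mk, preφ_ι]; rfl

theorem c_mkAlgHom (r : R5) : RingQuot.mkAlgHom R5 Crel (algebraMap R5 _ r) = c r :=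
  (RingQuot.mkAlgHom R5 Crel).commutes r

theorem f0_c (r : R5) : f0 (c r) = c (θ0 r) := by
  show uno (Φ (c r)) = c (θ0 r)
  rw [← c_mkAlgHom, ← mk_eq, Φ_mk, preφ_alg, uno_mko]

theorem f0_mul (x y : H) : f0 (x * y) = f0 y * f0 x := by
  show uno (Φ (x * y)) = uno (Φ y) * uno (Φ x)
  rw [map_mul, uno_mul]

theorem f0_add (x y : H) : f0 (x + y) = f0 x + f0 y := by
  show uno (Φ (x + y)) = uno (Φ x) + uno (Φ y)
  rw [map_add, uno_add]

theorem f0_zero' : f0 0 = 0 := by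
  show uno (Φ 0) = 0
  rw [map_zero]; rfl

theorem f0_neg (y : H) : f0 (-y) = -f0 y := by
  calc f0 (-y) = f0 (-y) + (f0 y + -f0 y) := by rw [Hanc, add_zero]
  _ = (f0 (-y) + f0 y) + -f0 y := by rw [add_assoc]
  _ = f0 (-y + y) + -f0 y := by rw [f0_add]
  _ = -f0 y := by rw [Hnac, f0_zero', zero_add]

theorem f0_sub (x y : H) : f0 (x - y) = f0 x - f0 y := by
  rw [Hsub x y, f0_add, f0_neg, ← Hsub]

theorem f0_one : f0 1 = 1 := by
  show uno (Φ 1) = 1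
  rw [map_one, uno_one]

/-- extensionality for ring homs out of `H` -/
theorem hom_ext {S : Type} [Semiring S] {g1 g2 : H →+* S}
    (hc : ∀ r, g1 (c r) = g2 (c r)) (h0 : g1 U0 = g2 U0) (h1 : g1 U1 = g2 U1)
    (h2 : g1 V0 = g2 V0) (h3 : g1 V1 = g2 V1) : ∀ x, g1 x = g2 x := by
  intro x
  obtain ⟨y, rfl⟩ := RingQuot.mkRingHom_surjective Crel x
  induction y using FreeAlgebra.induction with
  | grade0 r =>
    have e : RingQuot.mkRingHom Crel (algebraMap R5 _ r) = c r := by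
      rw [mk_eq, c_mkAlgHom]
    rw [e]; exact hc r
  | grade1 g =>
    have e : ∀ gg : Cgen, RingQuot.mkRingHom Crel (FreeAlgebra.ι R5 gg)
        = RingQuot.mkAlgHom R5 Crel (FreeAlgebra.ι R5 gg) := fun gg => mk_eq _
    cases g
    · rw [e]; exact h0
    · rw [e]; exact h1
    · rw [e]; exact h2
    · rw [e]; exact h3
  | mul a b ha hb => simp only [map_mul]; rw [ha, hb]
  | add a b ha hb => simp only [map_add]; rw [ha, hb]

/-- package an anti-multiplicative map as a ring hom to `Hop` -/
def toOp (f : H → H) (hadd : ∀ a b : H, f (a + b) = f a + f b) (hone : f 1 = 1)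
    (hmul : ∀ a b : H, f (a * b) = f b * f a) : H →+* Hop where
  toFun x := mko (f x)
  map_one' := by show mko (f 1) = 1; rw [hone, mko_one]
  map_mul' x y := by show mko (f (x * y)) = mko (f x) * mko (f y); rw [hmul, mko_mul]
  map_zero' := by
    show mko (f 0) = 0
    have h0 : f 0 = 0 := by
      have h1 := hadd 0 0
      rw [add_zero] at h1
      have h2 := congrArg (fun z : H => z - f 0) h1
      rw [Hss, Hsub, add_assoc, Hanc, add_zero] at h2
      exact h2.symm
    rw [h0, mko_zero]
  map_add' x y := by show mko (f (x + y)) = mko (f x) + mko (f y); rw [hadd, mko_add]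

theorem f0_zero : f0 0 = 0 := by
  show uno (Φ 0) = 0
  rw [map_zero]; rfl

/-- `f0 ∘ f0` as a ring hom -/
def F2 : H →+* H where
  toFun z := f0 (f0 z)
  map_one' := by show f0 (f0 1) = 1; rw [f0_one, f0_one]
  map_mul' a b := by
    show f0 (f0 (a * b)) = f0 (f0 a) * f0 (f0 b)
    rw [f0_mul, f0_mul]
  map_zero' := by show f0 (f0 0) = 0; rw [f0_zero, f0_zero]
  map_add' a b := by
    show f0 (f0 (a + b)) = f0 (f0 a) + f0 (f0 b)
    rw [f0_add, f0_add]

theorem f0_invol (x : H) : f0 (f0 x) = x := by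
  have h := hom_ext (g1 := F2) (g2 := RingHom.id H)
    (fun r => by show f0 (f0 (c r)) = c r; rw [f0_c, f0_c, θ0_θ0])
    (by show f0 (f0 U0) = U0; rw [f0_U0, f0_V1])
    (by show f0 (f0 U1) = U1; rw [f0_U1, f0_U1])
    (by show f0 (f0 V0) = V0; rw [f0_V0, f0_V0])
    (by show f0 (f0 V1) = V1; rw [f0_V1, f0_U0])
  exact h x

theorem f0_bij : Function.Bijective f0 :=
  Function.Involutive.bijective f0_invol

theorem f0_U0i : f0 U0i = V1i := by
  show f0 (U0 - c R5.u0h + c R5.u0hi) = V1 - c R5.v1h + c R5.v1hi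
  rw [f0_add, f0_sub, f0_U0, f0_c, f0_c, θ0_u0h, θ0_u0hi]

theorem f0_U1i : f0 U1i = U1i := by
  show f0 (U1 - c R5.u1h + c R5.u1hi) = U1 - c R5.u1h + c R5.u1hi
  rw [f0_add, f0_sub, f0_U1, f0_c, f0_c, θ0_u1h, θ0_u1hi]

theorem f0_V0i : f0 V0i = V0i := by
  show f0 (V0 - c R5.v0h + c R5.v0hi) = V0 - c R5.v0h + c R5.v0hi
  rw [f0_add, f0_sub, f0_V0, f0_c, f0_c, θ0_v0h, θ0_v0hi]

theorem f0_V1i : f0 V1i = U0i := by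
  show f0 (V1 - c R5.v1h + c R5.v1hi) = U0 - c R5.u0h + c R5.u0hi
  rw [f0_add, f0_sub, f0_V1, f0_c, f0_c, θ0_v1h, θ0_v1hi]

theorem f0_XX : f0 XX = YYi := by
  show f0 (V1i * U1i) = U1i * U0i
  rw [f0_mul, f0_U1i, f0_V1i]

theorem f0_YY : f0 YY = XXi := by
  show f0 (U0 * U1) = U1 * V1
  rw [f0_mul, f0_U1, f0_U0]

theorem f0_YYi : f0 YYi = XX := by
  show f0 (U1i * U0i) = V1i * U1i
  rw [f0_mul, f0_U0i, f0_U1i]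

theorem f0_phimap : PhiMap θ0 f0 :=
  ⟨f0_bij, f0_add, f0_one, f0_mul, f0_c, f0_U0, f0_V1, f0_U1, f0_V0⟩

theorem phimap_unique {θ : R5 ≃+* R5} {f g : H → H} (hf : PhiMap θ f) (hg : PhiMap θ g) :
    f = g := by
  obtain ⟨-, fadd, fone, fmul, fsl, fu0, fv1, fu1, fv0⟩ := hf
  obtain ⟨-, gadd, gone, gmul, gsl, gu0, gv1, gu1, gv0⟩ := hg
  have h := hom_ext (g1 := toOp f fadd fone fmul) (g2 := toOp g gadd gone gmul)
    (fun r => by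
      show mko (f (algebraMap R5 H r)) = mko (g (algebraMap R5 H r))
      rw [fsl r, gsl r])
    (by show mko (f U0) = mko (g U0); rw [fu0, gu0])
    (by show mko (f U1) = mko (g U1); rw [fu1, gu1])
    (by show mko (f V0) = mko (g V0); rw [fv0, gv0])
    (by show mko (f V1) = mko (g V1); rw [fv1, gv1])
  funext x
  have := h x
  have := congrArg uno this
  exact this

end Statement11Aux
namespace Statement11Aux

/-- conjugation of a ring equivalence by `f0`, as a ring hom -/
def conjHom (τ : H ≃+* H) : H →+* H where
  toFun x := f0 (τ (f0 x))
  map_one' := by show f0 (τ (f0 1)) = 1; rw [f0_one, map_one, f0_one]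
  map_mul' a b := by
    show f0 (τ (f0 (a * b))) = f0 (τ (f0 a)) * f0 (τ (f0 b))
    rw [f0_mul, map_mul, f0_mul]
  map_zero' := by show f0 (τ (f0 0)) = 0; rw [f0_zero, map_zero, f0_zero]
  map_add' a b := by
    show f0 (τ (f0 (a + b))) = f0 (τ (f0 a)) + f0 (τ (f0 b))
    rw [f0_add, map_add, f0_add]

theorem comp_pm {θp θm : R5 ≃+* R5} (hp : ThetaPlus θp) (hm : ThetaMinus θm) (r : R5) :
    θ0 (θp (θ0 r)) = θm r := by
  obtain ⟨p1, p2, p3, p4, p5⟩ := hp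
  obtain ⟨m1, m2, m3, m4, m5⟩ := hm
  have h : ((θ0 : R5 →+* R5).comp ((θp : R5 →+* R5).comp (θ0 : R5 →+* R5)))
      = (θm : R5 →+* R5) := by
    apply R5.hom_ext <;>
      simp [RingHom.comp_apply, θ0_q4, θ0_u0h, θ0_u1h, θ0_v0h, θ0_v1h,
        p1, p2, p3, p4, p5, m1, m2, m3, m4, m5]
  simpa using RingHom.congr_fun h r

theorem comp_mp {θp θm : R5 ≃+* R5} (hp : ThetaPlus θp) (hm : ThetaMinus θm) (r : R5) :
    θ0 (θm (θ0 r)) = θp r := by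
  obtain ⟨p1, p2, p3, p4, p5⟩ := hp
  obtain ⟨m1, m2, m3, m4, m5⟩ := hm
  have h : ((θ0 : R5 →+* R5).comp ((θm : R5 →+* R5).comp (θ0 : R5 →+* R5)))
      = (θp : R5 →+* R5) := by
    apply R5.hom_ext <;>
      simp [RingHom.comp_apply, θ0_q4, θ0_u0h, θ0_u1h, θ0_v0h, θ0_v1h,
        p1, p2, p3, p4, p5, m1, m2, m3, m4, m5]
  simpa using RingHom.congr_fun h r

theorem conj_pm {θp θm : R5 ≃+* R5} {τp τm : H ≃+* H} (hp : ThetaPlus θp)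
    (hm : ThetaMinus θm) (htp : TauPlus θp τp) (htm : TauMinus θm τm) (x : H) :
    f0 (τp (f0 x)) = τm x := by
  obtain ⟨slp, tpU1, tpV1, tpU0, tpV0⟩ := htp
  obtain ⟨slm, tmU0, tmU1, tmV1, tmV0⟩ := htm
  have h := hom_ext (g1 := conjHom τp) (g2 := (τm : H →+* H))
    (fun r => by
      show f0 (τp (f0 (c r))) = τm (c r)
      have e1 : τp (c (θ0 r)) = c (θp (θ0 r)) := slp (θ0 r)
      have e2 : τm (c r) = c (θm r) := slm r
      rw [f0_c, e1, f0_c, comp_pm hp hm r, ← e2])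
    (by show f0 (τp (f0 U0)) = τm U0
        rw [f0_U0, tpV1, f0_V1, tmU0])
    (by show f0 (τp (f0 U1)) = τm U1
        rw [f0_U1, tpU1, f0_U1, tmU1])
    (by show f0 (τp (f0 V0)) = τm V0
        rw [f0_V0, tpV0, tmV0]
        have L : f0 (c R5.q4i * XX * V0i) = V0i * (YYi * c R5.q4i) := by
          rw [f0_mul, f0_mul, f0_V0i, f0_XX, f0_c, θ0_q4i]
        rw [L, mul_assoc V0i V1 V0, idA, ← c_comm]
        rfl)
    (by show f0 (τp (f0 V1)) = τm V1
        rw [f0_V1, tpU0, tmV1]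
        have L : f0 (c R5.q4i * XX * U0i) = V1i * (YYi * c R5.q4i) := by
          rw [f0_mul, f0_mul, f0_U0i, f0_XX, f0_c, θ0_q4i]
        rw [L, ← c_comm, c_mid, mul_assoc (c R5.q4i) V1i YYi])
  exact h x

theorem conj_mp {θp θm : R5 ≃+* R5} {τp τm : H ≃+* H} (hp : ThetaPlus θp)
    (hm : ThetaMinus θm) (htp : TauPlus θp τp) (htm : TauMinus θm τm) (x : H) :
    f0 (τm (f0 x)) = τp x := by
  obtain ⟨slp, tpU1, tpV1, tpU0, tpV0⟩ := htp
  obtain ⟨slm, tmU0, tmU1, tmV1, tmV0⟩ := htm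
  have h := hom_ext (g1 := conjHom τm) (g2 := (τp : H →+* H))
    (fun r => by
      show f0 (τm (f0 (c r))) = τp (c r)
      have e1 : τm (c (θ0 r)) = c (θm (θ0 r)) := slm (θ0 r)
      have e2 : τp (c r) = c (θp r) := slp r
      rw [f0_c, e1, f0_c, comp_mp hp hm r, ← e2])
    (by show f0 (τm (f0 U0)) = τp U0
        rw [f0_U0, tmV1, tpU0]
        have L : f0 (c R5.q4i * V1i * YYi) = XX * (U0i * c R5.q4i) := by
          rw [f0_mul, f0_mul, f0_YYi, f0_V1i, f0_c, θ0_q4i]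
        rw [L, ← c_comm, c_mid, mul_assoc (c R5.q4i) XX U0i])
    (by show f0 (τm (f0 U1)) = τp U1
        rw [f0_U1, tmU1, f0_U1, tpU1])
    (by show f0 (τm (f0 V0)) = τp V0
        rw [f0_V0, tmV0, tpV0]
        have L : f0 (V0i * V1 * V0) = V0 * (U0 * V0i) := by
          rw [f0_mul, f0_mul, f0_V0, f0_V1, f0_V0i]
        rw [L, ← mul_assoc V0 U0 V0i, idB]
        rfl)
    (by show f0 (τm (f0 V1)) = τp V1
        rw [f0_V1, tmU0, f0_U0, tpV1])
  exact h x

end Statement11Aux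

open Statement11Aux in
theorem statement11' :
    (∃! θ : R5 ≃+* R5, ThetaPhi θ) ∧
    ∀ θ : R5 ≃+* R5, ThetaPhi θ →
      (∃! f : H → H, PhiMap θ f) ∧
      ∀ f : H → H, PhiMap θ f →
        f XX = YYi ∧ f YY = XXi ∧ (∀ x : H, f (f x) = x) ∧
        (∀ (θp θm : R5 ≃+* R5) (τp τm : H ≃+* H),
          ThetaPlus θp → ThetaMinus θm → TauPlus θp τp → TauMinus θm τm →
          (∀ x : H, f (τp (f x)) = τm x) ∧ (∀ x : H, f (τm (f x)) = τp x)) := by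
  constructor
  · exact ⟨θ0, θ0_phi, fun θ h => theta_unique h⟩
  · intro θ hθ
    have hθ0 : θ = θ0 := theta_unique hθ
    subst hθ0
    constructor
    · exact ⟨f0, f0_phimap, fun g hg => phimap_unique hg f0_phimap⟩
    · intro f hf
      have hf0 : f = f0 := phimap_unique hf f0_phimap
      subst hf0
      refine ⟨f0_XX, f0_YY, f0_invol, ?_⟩
      intro θp θm τp τm hp hm htp htm
      exact ⟨conj_pm hp hm htp htm, conj_mp hp hm htp htm⟩
/-- there is a unique ring anti-automorphism `φ` of `H`, semilinear over
`θ_φ`, with `φ(U₀) = V₁`, `φ(V₁) = U₀`, `φ(U₁) = U₁`, `φ(V₀) = V₀`; it satisfies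
`φ(𝕏) = 𝕐⁻¹`, `φ(𝕐) = 𝕏⁻¹`, `φ ∘ φ = id`, `φ ∘ τ₊ ∘ φ = τ₋`, `φ ∘ τ₋ ∘ φ = τ₊`. -/
theorem statement11 :
    (∃! θ : R5 ≃+* R5, ThetaPhi θ) ∧
    ∀ θ : R5 ≃+* R5, ThetaPhi θ →
      (∃! f : H → H, PhiMap θ f) ∧
      ∀ f : H → H, PhiMap θ f →
        f XX = YYi ∧ f YY = XXi ∧ (∀ x : H, f (f x) = x) ∧
        (∀ (θp θm : R5 ≃+* R5) (τp τm : H ≃+* H),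
          ThetaPlus θp → ThetaMinus θm → TauPlus θp τp → TauMinus θm τm →
          (∀ x : H, f (τp (f x)) = τm x) ∧ (∀ x : H, f (τm (f x)) = τp x)) :=
  statement11'
end
end
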